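/- arXiv:1810.09680 — 12 statements merged into one kernel-verified Lean document; each statement's English description precedes it below -/
import Mathlib

section
/- If U is a selective ultrafilter on ω (i.e., for every decreasing sequence (Y_n) of sets in U there exists X = {x_0 < x_1 < ...} ∈ U with X ⊆ Y_0 and X \ (x_n + 1) ⊆ Y_{x_n} for all n), then for every 2-coloring c of the unordered pairs of ω there is a set X ∈ U all of whose pairs receive the same color. -/
open Set Filter

/-- `U` is a selective ultrafilter: for every decreasing sequence `(Y n)` of members of `U`
there is `X = range e ∈ U` enumerated increasingly with `X ⊆ Y 0` and
`X \ (e n + 1) ⊆ Y (e n)` for every `n`. -/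
def IsSelectiveUltra (U : Ultrafilter ℕ) : Prop :=
  ∀ Y : ℕ → Set ℕ, (∀ n, Y n ∈ U) → (∀ n, Y (n + 1) ⊆ Y n) →
    ∃ e : ℕ → ℕ, StrictMono e ∧ Set.range e ∈ U ∧ Set.range e ⊆ Y 0 ∧
      ∀ n m : ℕ, e n < e m → e m ∈ Y (e n)

/-- Every selective ultrafilter is Ramsey: every 2-coloring of pairs has a
monochromatic set in the ultrafilter. -/
theorem selective_ultrafilter_is_ramsey (U : Ultrafilter ℕ)
    (hfree : ∀ n : ℕ, ({n} : Set ℕ) ∉ U)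
    (hsel : IsSelectiveUltra U)
    (c : ℕ → ℕ → Fin 2) (hsymm : ∀ a b : ℕ, c a b = c b a) :
    ∃ X ∈ U, ∃ i : Fin 2, ∀ a ∈ X, ∀ b ∈ X, a ≠ b → c a b = i := by
  classical
  -- no finite set belongs to U
  have hfin : ∀ S : Set ℕ, S.Finite → S ∉ U := by
    intro S hS hSU
    obtain ⟨x, -, hx⟩ := Ultrafilter.eq_pure_of_finite_mem hS hSU
    exact hfree x (by rw [hx]; exact rfl)
  -- the chosen color and large set for each n
  set i : ℕ → Fin 2 := fun n => if {m | c n m = 0} ∈ U then 0 else 1 with hi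
  set A : ℕ → Set ℕ := fun n => {m | c n m = i n} with hA
  have hAU : ∀ n, A n ∈ U := by
    intro n
    by_cases h : {m | c n m = 0} ∈ U
    · simp [hA, hi, h]
    · have h' : ({m | c n m = 0} : Set ℕ)ᶜ ∈ U :=
        (Ultrafilter.compl_mem_iff_notMem).2 h
      have : ({m | c n m = 0} : Set ℕ)ᶜ ⊆ {m | c n m = 1} := by
        intro m hm
        exact Fin.eq_one_of_ne_zero _ hm
      have h1 : ({m | c n m = 1} : Set ℕ) ∈ U := U.toFilter.mem_of_superset h' this
      simpa [hA, hi, h] using h1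
  -- decreasing sequence
  set Y : ℕ → Set ℕ := fun n => Set.Ioi n ∩ ⋂ k ∈ Finset.range (n + 1), A k with hY
  have hYU : ∀ n, Y n ∈ U := by
    intro n
    refine Filter.inter_mem ?_ ?_
    · have : (Set.Iic n : Set ℕ) ∉ U := hfin _ (Set.finite_Iic n)
      have := (Ultrafilter.compl_mem_iff_notMem).2 this
      simpa [Set.compl_Iic] using this
    · exact (Filter.biInter_finset_mem _).2 fun k _ => hAU k
  have hYdec : ∀ n, Y (n + 1) ⊆ Y n := by
    intro n x hx
    obtain ⟨h1, h2⟩ := hx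
    refine ⟨lt_trans (Nat.lt_succ_self n) h1, ?_⟩
    simp only [Set.mem_iInter] at h2 ⊢
    intro k hk
    exact h2 k (Finset.mem_range.2 (Nat.lt_succ_of_lt (Finset.mem_range.1 hk)))
  obtain ⟨e, hmono, hrange, -, hkey⟩ := hsel Y hYU hYdec
  -- for a < b both in range e, c a b = i a
  have hcolor : ∀ a b, a ∈ Set.range e → b ∈ Set.range e → a < b → c a b = i a := by
    rintro a b ⟨n, rfl⟩ ⟨m, rfl⟩ hab
    have hb := hkey n m hab
    obtain ⟨-, h2⟩ := hb
    simp only [Set.mem_iInter] at h2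
    exact h2 (e n) (Finset.mem_range.2 (Nat.lt_succ_self _))
  -- split range e by chosen color
  have hsplit : {x | x ∈ Set.range e ∧ i x = 0} ∈ U ∨ {x | x ∈ Set.range e ∧ i x = 1} ∈ U := by
    have hsub : Set.range e ⊆ {x | x ∈ Set.range e ∧ i x = 0} ∪ {x | x ∈ Set.range e ∧ i x = 1} := by
      intro x hx
      rcases (by omega : (i x).val = 0 ∨ (i x).val = 1) with h | h
      · exact Or.inl ⟨hx, Fin.ext h⟩
      · exact Or.inr ⟨hx, Fin.ext h⟩
    have := U.toFilter.mem_of_superset hrange hsub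
    exact (Ultrafilter.union_mem_iff).1 this
  rcases hsplit with h | h
  · refine ⟨_, h, 0, ?_⟩
    rintro a ⟨ha, hia⟩ b ⟨hb, hib⟩ hab
    rcases lt_or_gt_of_ne hab with hlt | hlt
    · rw [hcolor a b ha hb hlt, hia]
    · rw [hsymm, hcolor b a hb ha hlt, hib]
  · refine ⟨_, h, 1, ?_⟩
    rintro a ⟨ha, hia⟩ b ⟨hb, hib⟩ hab
    rcases lt_or_gt_of_ne hab with hlt | hlt
    · rw [hcolor a b ha hb hlt, hia]
    · rw [hsymm, hcolor b a hb ha hlt, hib]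
end

section
/- There is no ideal on ω that is a Gδ subset of the Cantor space 2^ω (identifying subsets of ω with their characteristic functions). -/
open Set Filter
open scoped Classical

/-- Characteristic function, identifying `P(ω)` with the Cantor space `2^ω`. -/
noncomputable def chi (A : Set ℕ) : ℕ → Bool := fun n => if n ∈ A then true else false

/-- An ideal on ω: contains all finite sets, closed under subsets and finite unions,
and proper. -/
def IsIdealOnNat (I : Set (Set ℕ)) : Prop :=
  (∀ A : Set ℕ, A.Finite → A ∈ I) ∧
  (∀ A B : Set ℕ, A ∈ I → B ⊆ A → B ∈ I) ∧
  (∀ A B : Set ℕ, A ∈ I → B ∈ I → A ∪ B ∈ I) ∧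
  (Set.univ : Set ℕ) ∉ I

/-- The "flip all bits" homeomorphism (as a map). -/
def flipAll (x : ℕ → Bool) : ℕ → Bool := fun n => !(x n)

lemma continuous_flipAll : Continuous flipAll :=
  continuous_pi fun n => (continuous_of_discreteTopology (f := not)).comp (continuous_apply n)

lemma isGδ_preimage {s : Set (ℕ → Bool)} (hs : IsGδ s) {f : (ℕ → Bool) → ℕ → Bool}
    (hf : Continuous f) : IsGδ (f ⁻¹' s) := by
  obtain ⟨T, hTopen, hTc, rfl⟩ := hs
  rw [Set.sInter_eq_biInter, Set.preimage_iInter₂]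
  exact .biInter hTc fun t ht => ((hTopen t ht).preimage hf).isGδ

/-- Density of a set whose elements realize every finite partial condition. -/
lemma dense_of_finite_agree (S : Set (ℕ → Bool))
    (h : ∀ (x : ℕ → Bool) (F : Set ℕ), F.Finite → ∃ y ∈ S, ∀ n ∈ F, y n = x n) :
    Dense S := by
  intro x
  rw [mem_closure_iff_nhds]
  intro U hU
  rw [nhds_pi, Filter.mem_pi] at hU
  obtain ⟨F, hF, t, ht, hsub⟩ := hU
  obtain ⟨y, hyS, hy⟩ := h x F hF
  refine ⟨y, hsub fun n hn => ?_, hyS⟩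
  rw [hy n hn]
  exact mem_of_mem_nhds (ht n)

lemma chi_mem_iff (A : Set ℕ) (n : ℕ) : chi A n = true ↔ n ∈ A := by
  simp [chi]

/-- There is no ideal on ω that is a Gδ subset of the Cantor space. -/
theorem no_Gdelta_ideal :
    ¬ ∃ I : Set (Set ℕ), IsIdealOnNat I ∧ IsGδ (chi '' I) := by
  rintro ⟨I, ⟨hfin, hsub, hunion, hproper⟩, hGδ⟩
  letI := TopologicalSpace.upgradeIsCompletelyMetrizable (ℕ → Bool)
  -- the ideal's image is dense
  have hd1 : Dense (chi '' I) := by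
    refine dense_of_finite_agree _ fun x F hF => ?_
    refine ⟨chi {n ∈ F | x n = true}, ⟨_, hfin _ (hF.subset (sep_subset _ _)), rfl⟩,
      fun n hn => ?_⟩
    by_cases hx : x n = true <;> simp [chi, hn, hx]
  -- the flipped image is dense
  have hd2 : Dense (flipAll ⁻¹' (chi '' I)) := by
    refine dense_of_finite_agree _ fun x F hF => ?_
    refine ⟨flipAll (chi {n ∈ F | x n = false}), ?_, fun n hn => ?_⟩
    · rw [Set.mem_preimage]
      have : flipAll (flipAll (chi {n ∈ F | x n = false})) = chi {n ∈ F | x n = false} := by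
        funext n; simp [flipAll]
      rw [this]
      exact ⟨_, hfin _ (hF.subset (sep_subset _ _)), rfl⟩
    · by_cases hx : x n = false <;> simp [flipAll, chi, hn, hx]
  have hG2 : IsGδ (flipAll ⁻¹' (chi '' I)) := isGδ_preimage hGδ continuous_flipAll
  obtain ⟨x, hx1, hx2⟩ := (hd1.inter_of_Gδ hGδ hG2 hd2).nonempty
  obtain ⟨A, hA, hAx⟩ := hx1
  obtain ⟨B, hB, hBx⟩ := hx2
  -- B = Aᶜ
  have hcompl : B = Aᶜ := by
    ext n
    have h1 : chi A n = x n := by rw [hAx]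
    have h2 : chi B n = !(x n) := by rw [hBx]; rfl
    rw [← chi_mem_iff, mem_compl_iff, ← chi_mem_iff, h1, h2]
    cases x n <;> simp
  have : (Set.univ : Set ℕ) ∈ I := by
    have := hunion A B hA hB
    rwa [hcompl, union_compl_self] at this
  exact hproper this
end

section
/- If an ideal I on ω has the Baire property as a subset of 2^ω, then I is meager. -/
open Set Filter
open scoped Classical

/-- A set has the Baire property if it differs from an open set by a meager set. -/
def HasBaireProperty {X : Type*} [TopologicalSpace X] (s : Set X) : Prop :=
  ∃ u : Set X, IsOpen u ∧ IsMeagre (symmDiff s u)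

/-- Flipping the bits indicated by a mask `f` is a homeomorphism of `2^ω`. -/
def flipHomeo (f : ℕ → Bool) : (ℕ → Bool) ≃ₜ (ℕ → Bool) where
  toFun x := fun n => xor (f n) (x n)
  invFun x := fun n => xor (f n) (x n)
  left_inv x := by funext n; cases f n <;> simp
  right_inv x := by funext n; cases f n <;> simp
  continuous_toFun := continuous_pi fun n =>
    (continuous_of_discreteTopology (f := fun b => xor (f n) b)).comp (continuous_apply n)
  continuous_invFun := continuous_pi fun n =>
    (continuous_of_discreteTopology (f := fun b => xor (f n) b)).comp (continuous_apply n)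

lemma flip_mem_image (I : Set (Set ℕ)) (hI : IsIdealOnNat I) (f : ℕ → Bool)
    (hf : {n | f n = true}.Finite) {x : ℕ → Bool} (hx : x ∈ chi '' I) :
    (fun n => xor (f n) (x n)) ∈ chi '' I := by
  obtain ⟨A, hA, rfl⟩ := hx
  set F : Set ℕ := {n | f n = true}
  refine ⟨(A \ F) ∪ (F \ A), ?_, ?_⟩
  · exact hI.2.1 (A ∪ F) _ (hI.2.2.1 A F hA (hI.1 F hf))
      (by intro n hn; rcases hn with h | h; exacts [Or.inl h.1, Or.inr h.1])
  · funext n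
    by_cases hA : n ∈ A <;> rcases hfn : f n with _ | _ <;>
      simp [chi, hA, F, hfn]

/-- If an ideal on ω has the Baire property, then it is meager. -/
theorem ideal_with_baire_property_is_meager (I : Set (Set ℕ)) (hI : IsIdealOnNat I)
    (hBP : HasBaireProperty (chi '' I)) : IsMeagre (chi '' I) := by
  obtain ⟨U, hUopen, hM⟩ := hBP
  set S : Set (ℕ → Bool) := chi '' I with hS
  rcases eq_empty_or_nonempty U with rfl | ⟨x, hxU⟩
  · simpa [symmDiff] using hM
  exfalso
  -- find a basic cylinder around x inside U
  obtain ⟨t, u, hu, hsub⟩ := isOpen_pi_iff.1 hUopen x hxU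
  set C : Set (ℕ → Bool) := {y | ∀ i ∈ t, y i = x i} with hC
  have hCU : C ⊆ U := by
    intro y hy
    exact hsub (fun i hi => by rw [hy i hi]; exact (hu i hi).2)
  have hCS : IsMeagre (C \ S) := by
    refine hM.mono fun y hy => Or.inr ⟨hCU hy.1, hy.2⟩
  -- the two flip maps
  set g : ℕ → Bool := fun n => if n ∈ t then true else false with hg
  have hgfin : {n | g n = true}.Finite := by
    apply Set.Finite.subset t.finite_toSet
    intro n hn
    simp only [hg, mem_setOf_eq] at hn
    by_cases h : n ∈ t
    · exact Finset.mem_coe.mpr h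
    · simp [h] at hn
  set c : ℕ → Bool := fun _ => true with hc
  have hcfin_inv : ∀ y : ℕ → Bool, (fun n => xor true (((fun n => xor true (y n))) n)) = y := by
    intro y; funext n; simp
  -- the opposite cylinder
  set C' : Set (ℕ → Bool) := {y | ∀ i ∈ t, y i = !(x i)} with hC'
  have hC'open : IsOpen C' := by
    have : C' = Set.pi ↑t (fun i => {!(x i)}) := by
      ext y; simp [hC', Set.mem_pi]
    rw [this]
    exact isOpen_set_pi t.finite_toSet (fun i _ => isOpen_discrete _)
  have hC'ne : C'.Nonempty := ⟨fun i => !(x i), fun i _ => rfl⟩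
  -- S is comeager on C'
  have h1 : IsMeagre (C' \ S) := by
    have hpre : C' \ S ⊆ (flipHomeo g) ⁻¹' (C \ S) := by
      intro y ⟨hy1, hy2⟩
      constructor
      · intro i hi
        have := hy1 i hi
        simp only [flipHomeo, Homeomorph.homeomorph_mk_coe, Equiv.coe_fn_mk, hg,
          if_pos hi, this]
        cases x i <;> simp
      · intro hmem
        apply hy2
        have := flip_mem_image I hI g hgfin (x := (flipHomeo g) y) hmem
        have heq : (fun n => xor (g n) ((flipHomeo g) y n)) = y := by
          funext n
          simp only [flipHomeo, Homeomorph.homeomorph_mk_coe, Equiv.coe_fn_mk]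
          cases g n <;> simp
        rwa [heq] at this
    exact (hCS.preimage_of_isOpenMap (flipHomeo g).continuous (flipHomeo g).isOpenMap).mono hpre
  -- the complement image of S is comeager on C'
  have h2 : IsMeagre (C' \ (flipHomeo c) ⁻¹' S) := by
    have hpre : C' \ (flipHomeo c) ⁻¹' S ⊆ (flipHomeo c) ⁻¹' (C \ S) := by
      intro y ⟨hy1, hy2⟩
      refine ⟨fun i hi => ?_, hy2⟩
      have := hy1 i hi
      simp only [flipHomeo, Homeomorph.homeomorph_mk_coe, Equiv.coe_fn_mk, hc, this]
      cases x i <;> simp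
    exact (hCS.preimage_of_isOpenMap (flipHomeo c).continuous (flipHomeo c).isOpenMap).mono hpre
  -- Baire: find a common point
  letI := TopologicalSpace.upgradeIsCompletelyMetrizable (ℕ → Bool)
  have hmeag : IsMeagre ((C' \ S) ∪ (C' \ (flipHomeo c) ⁻¹' S)) := by
    rw [IsMeagre, Set.compl_union]
    exact Filter.inter_mem h1 h2
  have hdense : Dense ((C' \ S) ∪ (C' \ (flipHomeo c) ⁻¹' S))ᶜ :=
    dense_of_mem_residual hmeag
  obtain ⟨y, hyC', hyn⟩ := hdense.inter_open_nonempty C' hC'open hC'ne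
  have hyS : y ∈ S := by
    by_contra h
    exact hyn (Or.inl ⟨hyC', h⟩)
  have hycS : (flipHomeo c) y ∈ S := by
    by_contra h
    exact hyn (Or.inr ⟨hyC', h⟩)
  obtain ⟨A, hA, hAy⟩ := hyS
  obtain ⟨B, hB, hBy⟩ := hycS
  apply hI.2.2.2
  have huniv : A ∪ B = Set.univ := by
    ext n
    simp only [Set.mem_union, Set.mem_univ, iff_true]
    by_cases hn : n ∈ A
    · exact Or.inl hn
    · right
      have h1 : chi A n = false := by simp [chi, hn]
      have h2 : chi B n = xor true (y n) := by
        rw [hBy]; simp [flipHomeo, hc]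
      rw [← hAy, h1] at h2
      simp only [chi] at h2
      by_contra hB'
      simp [hB'] at h2
  rw [← huniv]
  exact hI.2.2.1 A B hA hB
end

section
/- A filter F on ω is non-meager (as a subset of 2^ω) if and only if for every interval partition {P_n : n ∈ ω} of ω there is X ∈ F such that X ∩ P_n = ∅ for infinitely many n. -/
open Set Filter
open scoped Classical

/-- A filter on ω containing all cofinite sets. -/
def IsFilterOnNat (F : Set (Set ℕ)) : Prop :=
  (∀ A : Set ℕ, Aᶜ.Finite → A ∈ F) ∧
  (∀ A B : Set ℕ, A ∈ F → A ⊆ B → B ∈ F) ∧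
  (∀ A B : Set ℕ, A ∈ F → B ∈ F → A ∩ B ∈ F) ∧
  (∅ : Set ℕ) ∉ F

/-- `p` codes the interval partition of ω into the consecutive intervals
`[p n, p (n+1))`. -/
def IntervalPartition (p : ℕ → ℕ) : Prop := p 0 = 0 ∧ StrictMono p


lemma cyl_isOpen (σ : ℕ → Bool) (n : ℕ) : IsOpen {y : ℕ → Bool | ∀ i < n, y i = σ i} := by
  have h : {y : ℕ → Bool | ∀ i < n, y i = σ i}
      = ⋂ i ∈ Finset.range n, (fun y : ℕ → Bool => y i) ⁻¹' {σ i} := by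
    ext y; simp [Finset.mem_range]
  rw [h]
  exact isOpen_biInter_finset fun i _ =>
    (continuous_apply i).isOpen_preimage _ (isOpen_discrete _)

lemma exists_cyl_subset {x : ℕ → Bool} {s : Set (ℕ → Bool)} (hs : s ∈ nhds x) :
    ∃ n, {y : ℕ → Bool | ∀ i < n, y i = x i} ⊆ s := by
  rw [nhds_pi] at hs
  have : (fun i : ℕ => nhds (x i)) = fun i => pure (x i) := by
    funext i; exact nhds_discrete Bool ▸ rfl
  rw [this] at hs
  obtain ⟨I, hIfin, t, ht, hsub⟩ := Filter.mem_pi.mp hs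
  obtain ⟨b, hb⟩ := hIfin.bddAbove
  refine ⟨b + 1, fun y hy => hsub fun i hi => ?_⟩
  have : y i = x i := hy i (Nat.lt_succ_of_le (hb hi))
  rw [this]; exact mem_pure.mp (ht i)

lemma interior_union_empty {X : Type*} [TopologicalSpace X] {C D : Set X}
    (hC : IsClosed C) (hCi : interior C = ∅) (hDi : interior D = ∅) :
    interior (C ∪ D) = ∅ := by
  have h1 : interior (C ∪ D) \ C ⊆ interior D := by
    apply interior_maximal
    · intro x hx
      rcases (interior_subset hx.1) with h | h
      · exact absurd h hx.2
      · exact h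
    · exact isOpen_interior.sdiff hC
  have h2 : interior (C ∪ D) ⊆ C := by
    intro x hx
    by_contra hxC
    exact absurd (h1 ⟨hx, hxC⟩) (by rw [hDi]; exact notMem_empty x)
  have := interior_maximal h2 isOpen_interior
  rw [hCi] at this
  exact eq_empty_iff_forall_notMem.mpr fun x hx => this hx

lemma key_ext {M : Set (ℕ → Bool)} (hMc : IsClosed M) (hMi : interior M = ∅)
    (σ : ℕ → Bool) (k : ℕ) :
    ∃ m, k < m ∧ ∃ τ : ℕ → Bool, (∀ i < k, τ i = σ i) ∧
      ∀ y : ℕ → Bool, (∀ i < m, y i = τ i) → y ∉ M := by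
  have hnot : ¬ {y : ℕ → Bool | ∀ i < k, y i = σ i} ⊆ M := by
    intro h
    have := interior_maximal h (cyl_isOpen σ k)
    rw [hMi] at this
    exact this (show σ ∈ {y : ℕ → Bool | ∀ i < k, y i = σ i} from fun i _ => rfl)
  obtain ⟨x, hxc, hxM⟩ := not_subset.mp hnot
  have : Mᶜ ∈ nhds x := hMc.isOpen_compl.mem_nhds hxM
  obtain ⟨n', hn'⟩ := exists_cyl_subset this
  refine ⟨max (k + 1) n', lt_of_lt_of_le (Nat.lt_succ_self k) (le_max_left _ _), x,
    fun i hi => hxc i hi, fun y hy => ?_⟩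
  exact hn' fun i hi => hy i (lt_of_lt_of_le hi (le_max_right _ _))

lemma uniform_ext {M : Set (ℕ → Bool)} (hMc : IsClosed M) (hMi : interior M = ∅) (k : ℕ) :
    ∃ m, k < m ∧ ∀ σ : ℕ → Bool, ∃ τ : ℕ → Bool, (∀ i < k, τ i = σ i) ∧
      ∀ y : ℕ → Bool, (∀ i < m, y i = τ i) → y ∉ M := by
  have H : ∀ s : Fin k → Bool, ∃ m, k < m ∧ ∃ τ : ℕ → Bool,
      (∀ i < k, τ i = (fun j => if h : j < k then s ⟨j, h⟩ else false) i) ∧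
      ∀ y : ℕ → Bool, (∀ i < m, y i = τ i) → y ∉ M :=
    fun s => key_ext hMc hMi _ k
  choose f hf1 τf hτ1 hτ2 using H
  refine ⟨max (k + 1) (Finset.univ.sup f),
    lt_of_lt_of_le (Nat.lt_succ_self k) (le_max_left _ _), fun σ => ?_⟩
  set s : Fin k → Bool := fun i => σ i with hs
  refine ⟨τf s, fun i hi => by simpa [hi] using hτ1 s i hi, fun y hy => ?_⟩
  apply hτ2 s
  intro i hi
  exact hy i (lt_of_lt_of_le hi (le_trans (Finset.le_sup (Finset.mem_univ s)) (le_max_right _ _)))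

lemma fwd_dir (F : Set (Set ℕ)) (hF : IsFilterOnNat F) (hnm : ¬ IsMeagre (chi '' F))
    (p : ℕ → ℕ) (hp : IntervalPartition p) :
    ∃ X ∈ F, {n : ℕ | X ∩ Set.Ico (p n) (p (n + 1)) = ∅}.Infinite := by
  obtain ⟨hp0, hpm⟩ := hp
  set E : ℕ → Set (ℕ → Bool) :=
    fun n => {x | ∀ i, p n ≤ i → i < p (n + 1) → x i = false} with hE
  have hEopen : ∀ n, IsOpen (E n) := by
    intro n
    have h : E n = ⋂ i ∈ Finset.Ico (p n) (p (n + 1)),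
        (fun y : ℕ → Bool => y i) ⁻¹' {false} := by
      ext y; simp [hE]
    rw [h]
    exact isOpen_biInter_finset fun i _ =>
      (continuous_apply i).isOpen_preimage _ (isOpen_discrete _)
  set D : ℕ → Set (ℕ → Bool) := fun m => ⋃ n, ⋃ (_ : m ≤ n), E n with hD
  have hDopen : ∀ m, IsOpen (D m) := fun m => isOpen_iUnion fun n => isOpen_iUnion fun _ => hEopen n
  have hDdense : ∀ m, Dense (D m) := by
    intro m
    rw [dense_iff_inter_open]
    rintro U hU ⟨x, hxU⟩
    obtain ⟨N, hN⟩ := exists_cyl_subset (hU.mem_nhds hxU)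
    set n := max m N with hn
    set z : ℕ → Bool := fun i => if p n ≤ i ∧ i < p (n + 1) then false else x i with hz
    refine ⟨z, hN fun i hi => ?_, mem_iUnion.mpr ⟨n, mem_iUnion.mpr ⟨le_max_left _ _,
      fun i h1 h2 => by simp [hz, h1, h2]⟩⟩⟩
    have : ¬ (p n ≤ i) := by
      intro h
      exact absurd (lt_of_lt_of_le hi (le_trans (le_max_right m N) (le_trans hpm.le_apply h)))
        (lt_irrefl i)
    simp [hz, this]
  have hG : (⋂ m, D m) ∈ residual (ℕ → Bool) :=
    countable_iInter_mem.mpr fun m => residual_of_dense_open (hDopen m) (hDdense m)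
  have hne : (chi '' F ∩ ⋂ m, D m).Nonempty := by
    by_contra h
    rw [not_nonempty_iff_eq_empty] at h
    have hsub : chi '' F ⊆ (⋂ m, D m)ᶜ := by
      intro x hx
      intro hxG
      have : x ∈ chi '' F ∩ ⋂ m, D m := ⟨hx, hxG⟩
      rw [h] at this
      exact this
    have : IsMeagre ((⋂ m, D m)ᶜ) := by
      rw [IsMeagre, compl_compl]; exact hG
    exact hnm (this.mono hsub)
  obtain ⟨x, ⟨X, hXF, hXx⟩, hxG⟩ := hne
  refine ⟨X, hXF, ?_⟩
  have hkey : ∀ m, ∃ n, m ≤ n ∧ X ∩ Set.Ico (p n) (p (n + 1)) = ∅ := by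
    intro m
    have := mem_iInter.mp hxG m
    obtain ⟨n, hmem⟩ := mem_iUnion.mp this
    obtain ⟨hmn, hEn⟩ := mem_iUnion.mp hmem
    refine ⟨n, hmn, eq_empty_iff_forall_notMem.mpr ?_⟩
    rintro i ⟨hiX, hi1, hi2⟩
    have h1 : x i = false := hEn i hi1 hi2
    have h2 : x i = true := by rw [← hXx]; simp [chi, hiX]
    rw [h1] at h2; exact Bool.false_ne_true h2
  apply Set.infinite_of_not_bddAbove
  rintro ⟨b, hb⟩
  obtain ⟨n, hbn, hn⟩ := hkey (b + 1)
  exact absurd (hb hn) (by omega)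

lemma bwd_dir (F : Set (Set ℕ)) (hF : IsFilterOnNat F)
    (h : ∀ p : ℕ → ℕ, IntervalPartition p →
        ∃ X ∈ F, {n : ℕ | X ∩ Set.Ico (p n) (p (n + 1)) = ∅}.Infinite) :
    ¬ IsMeagre (chi '' F) := by
  intro hm
  obtain ⟨S, hSnwd, hScnt, hSsub⟩ := isMeagre_iff_countable_union_isNowhereDense.mp hm
  obtain ⟨t0, ht0⟩ := (hScnt.insert ∅).exists_eq_range (insert_nonempty _ _)
  set t : ℕ → Set (ℕ → Bool) := fun n => closure (t0 n) with ht
  have htc : ∀ n, IsClosed (t n) := fun n => isClosed_closure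
  have hti : ∀ n, interior (t n) = ∅ := by
    intro n
    have h1 : t0 n ∈ insert (∅ : Set (ℕ → Bool)) S := ht0 ▸ mem_range_self n
    have h2 : IsNowhereDense (t0 n) := by
      rcases h1 with h1 | h1
      · rw [h1]; exact isNowhereDense_empty
      · exact hSnwd _ h1
    have := h2.closure
    rwa [IsNowhereDense, closure_closure] at this
  -- monotone closed nwd sequence
  set M : ℕ → Set (ℕ → Bool) := fun n => ⋃ i ∈ Finset.range (n + 1), t i with hM
  have hMc : ∀ n, IsClosed (M n) := fun n =>
    Set.Finite.isClosed_biUnion (Finset.range (n + 1)).finite_toSet fun i _ => htc i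
  have hMsucc : ∀ n, M (n + 1) = M n ∪ t (n + 1) := by
    intro n
    ext x
    simp only [hM, mem_iUnion, Finset.mem_range, mem_union]
    constructor
    · rintro ⟨i, hi, hx⟩
      rcases Nat.lt_succ_iff_lt_or_eq.1 hi with h | h
      · exact Or.inl ⟨i, h, hx⟩
      · exact Or.inr (h ▸ hx)
    · rintro (⟨i, hi, hx⟩ | hx)
      · exact ⟨i, Nat.lt_succ_of_lt hi, hx⟩
      · exact ⟨n + 1, Nat.lt_succ_self _, hx⟩
  have hMi : ∀ n, interior (M n) = ∅ := by
    intro n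
    induction n with
    | zero => simpa [hM] using hti 0
    | succ n ih =>
      rw [hMsucc n]
      exact interior_union_empty (hMc n) ih (hti (n + 1))
  have hMmono : ∀ j n, j ≤ n → M j ⊆ M n := by
    intro j n hjn x hx
    simp only [hM, mem_iUnion, Finset.mem_range] at hx ⊢
    obtain ⟨i, hi, hxi⟩ := hx
    exact ⟨i, by omega, hxi⟩
  have htM : ∀ j, t j ⊆ M j := by
    intro j x hx
    simp only [hM, mem_iUnion, Finset.mem_range]
    exact ⟨j, Nat.lt_succ_self j, hx⟩
  -- build the partition
  have hU : ∀ n k, ∃ m, k < m ∧ ∀ σ : ℕ → Bool, ∃ τ : ℕ → Bool, (∀ i < k, τ i = σ i) ∧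
      ∀ y : ℕ → Bool, (∀ i < m, y i = τ i) → y ∉ M n :=
    fun n k => uniform_ext (hMc n) (hMi n) k
  set p : ℕ → ℕ := fun n => Nat.rec 0 (fun n pn => (hU n pn).choose) n with hp
  have hps : ∀ n, p (n + 1) = (hU n (p n)).choose := fun n => rfl
  have hspec : ∀ n, p n < p (n + 1) ∧ ∀ σ : ℕ → Bool, ∃ τ : ℕ → Bool,
      (∀ i < p n, τ i = σ i) ∧
      ∀ y : ℕ → Bool, (∀ i < p (n + 1), y i = τ i) → y ∉ M n :=
    fun n => (hU n (p n)).choose_spec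
  have hpmono : StrictMono p := strictMono_nat_of_lt_succ fun n => (hspec n).1
  obtain ⟨X, hXF, hK⟩ := h p ⟨rfl, hpmono⟩
  set K := {n : ℕ | X ∩ Set.Ico (p n) (p (n + 1)) = ∅} with hKdef
  -- build Y
  set s : ℕ → (ℕ → Bool) := fun n => Nat.rec (chi X) (fun n sn =>
    if n ∈ K then
      (fun i => if p n ≤ i ∧ i < p (n + 1) then ((hspec n).2 sn).choose i else sn i)
    else sn) n with hs
  have hssucc : ∀ n, s (n + 1) = if n ∈ K then
      (fun i => if p n ≤ i ∧ i < p (n + 1) then ((hspec n).2 (s n)).choose i else s n i)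
    else s n := fun n => rfl
  have stab : ∀ n i, i < p n → s (n + 1) i = s n i := by
    intro n i hi
    rw [hssucc n]
    by_cases hnK : n ∈ K
    · simp only [if_pos hnK]
      have : ¬ (p n ≤ i ∧ i < p (n + 1)) := fun ⟨h1, _⟩ => absurd (lt_of_le_of_lt h1 hi) (lt_irrefl _)
      simp [this]
    · simp [hnK]
  have stab' : ∀ n m, n ≤ m → ∀ i, i < p n → s m i = s n i := by
    intro n m hnm
    induction m, hnm using Nat.le_induction with
    | base => intro i _; rfl
    | succ m hnm ih =>
      intro i hi
      rw [stab m i (lt_of_lt_of_le hi (hpmono.monotone hnm)), ih i hi]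
  set y : ℕ → Bool := fun i => s (i + 1) i with hy
  have hyval : ∀ n i, i < p n → y i = s n i := by
    intro n i hi
    rcases le_total n (i + 1) with hle | hle
    · exact stab' n (i + 1) hle i hi
    · have hi' : i < p (i + 1) := lt_of_lt_of_le (Nat.lt_succ_self i) hpmono.le_apply
      exact (stab' (i + 1) n hle i hi').symm
  set Y : Set ℕ := {i | y i = true} with hYdef
  have hsX : ∀ n i, chi X i = true → s n i = true := by
    intro n
    induction n with
    | zero => intro i h; exact h
    | succ n ih =>
      intro i hXi
      rw [hssucc n]
      by_cases hnK : n ∈ K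
      · simp only [if_pos hnK]
        by_cases hcond : p n ≤ i ∧ i < p (n + 1)
        · exfalso
          have hiX : i ∈ X := by
            by_contra hiX
            simp [chi, hiX] at hXi
          have : i ∈ X ∩ Set.Ico (p n) (p (n + 1)) := ⟨hiX, hcond.1, hcond.2⟩
          rw [hnK] at this
          exact this
        · simp only [if_neg hcond]
          exact ih i hXi
      · simp only [if_neg hnK]
        exact ih i hXi
  have hXY : X ⊆ Y := by
    intro i hiX
    have : chi X i = true := by simp [chi, hiX]
    exact hsX (i + 1) i this
  have hYF : Y ∈ F := hF.2.1 X Y hXF hXY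
  have hchiY : chi Y = y := by
    funext i
    by_cases hi : y i = true
    · simp [chi, hYdef, hi]
    · have : y i = false := by
        cases hyi : y i
        · rfl
        · exact absurd hyi hi
      simp [chi, hYdef, this, hi]
  have hyM : ∀ n ∈ K, y ∉ M n := by
    intro n hnK
    have hτ := ((hspec n).2 (s n)).choose_spec
    apply hτ.2
    intro i hi
    rw [hyval (n + 1) i hi, hssucc n, if_pos hnK]
    by_cases hcond : p n ≤ i ∧ i < p (n + 1)
    · simp [hcond]
    · simp only [if_neg hcond]
      have hipn : i < p n := by
        rcases Nat.lt_or_ge i (p n) with h1 | h1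
        · exact h1
        · exact absurd ⟨h1, hi⟩ hcond
      exact (hτ.1 i hipn).symm
  have hyMall : ∀ j, y ∉ M j := by
    intro j hyj
    obtain ⟨n, hnK, hjn⟩ := hK.exists_gt j
    exact hyM n hnK (hMmono j n hjn.le hyj)
  -- contradiction
  have hymem : y ∈ chi '' F := ⟨Y, hYF, hchiY⟩
  obtain ⟨u, huS, hyu⟩ := hSsub hymem
  have : u ∈ range t0 := ht0 ▸ mem_insert_of_mem _ huS
  obtain ⟨j, hj⟩ := this
  have hyt0 : y ∈ t0 j := by rw [hj]; exact hyu
  exact hyMall j (htM j (subset_closure hyt0))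


/-- Talagrand/Jalali-Naini: a filter is non-meager iff for every interval partition
some member of the filter misses infinitely many intervals. -/
theorem nonmeager_filter_iff_misses_intervals (F : Set (Set ℕ)) (hF : IsFilterOnNat F) :
    ¬ IsMeagre (chi '' F) ↔
      ∀ p : ℕ → ℕ, IntervalPartition p →
        ∃ X ∈ F, {n : ℕ | X ∩ Set.Ico (p n) (p (n + 1)) = ∅}.Infinite :=
  ⟨fun hnm p hp => fwd_dir F hF hnm p hp, fun h => bwd_dir F hF h⟩
end

section
/- A filter F on ω is meager (as a subset of 2^ω) if and only if the family of enumeration functions {e_X : X ∈ F} is bounded in (ω^ω, ≤*), where e_X is the increasing enumeration of X. -/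
open Set Filter
open scoped Classical

namespace MFAux

/-- Number of `true` coordinates below `N`. -/
def cardBelow (N : ℕ) (x : ℕ → Bool) : ℕ :=
  (Finset.univ.filter (fun k : Fin N => x k = true)).card

lemma cardBelow_eq (N : ℕ) (x : ℕ → Bool) :
    cardBelow N x = ((Finset.range N).filter fun k => x k = true).card := by
  apply Finset.card_bij (fun (k : Fin N) _ => (k : ℕ))
  · intro k hk
    simp only [Finset.mem_filter, Finset.mem_univ, true_and] at hk
    simp [Finset.mem_filter, Finset.mem_range, k.isLt, hk]
  · intro a _ b _ hab
    exact Fin.val_injective hab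
  · intro b hb
    simp only [Finset.mem_filter, Finset.mem_range] at hb
    exact ⟨⟨b, hb.1⟩, by simp [Finset.mem_filter, hb.2], rfl⟩

lemma cardBelow_le {N N0 : ℕ} {x : ℕ → Bool} (h : ∀ k, N0 ≤ k → x k = false) :
    cardBelow N x ≤ N0 := by
  rw [cardBelow_eq]
  have : cardBelow N x ≤ (Finset.range N0).card := by
    rw [cardBelow_eq]
    apply Finset.card_le_card
    intro k hk
    simp only [Finset.mem_filter, Finset.mem_range] at hk ⊢
    by_contra hlt
    push_neg at hlt
    simp [h _ hlt] at hk
  rw [cardBelow_eq] at this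
  simpa using this

lemma le_cardBelow {A : Set ℕ} {e : ℕ → ℕ} (he : StrictMono e) (hrange : Set.range e = A)
    {n N : ℕ} (hN : e n < N) : n + 1 ≤ cardBelow N (chi A) := by
  rw [cardBelow_eq]
  have key : (Finset.range (n + 1)).card ≤ ((Finset.range N).filter fun k => chi A k = true).card := by
    apply Finset.card_le_card_of_injOn e
    · intro i hi
      simp only [Finset.mem_coe, Finset.mem_range] at hi
      have h1 : e i < N := lt_of_le_of_lt (he.monotone (by omega)) hN
      have h2 : e i ∈ A := by rw [← hrange]; exact Set.mem_range_self i
      simp [Finset.mem_filter, Finset.mem_range, h1, chi, h2]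
    · exact fun a _ b _ hab => he.injective hab
  simpa using key


/-- The set of `x` satisfying the domination condition from stage `m` on is closed. -/
lemma isClosed_C (g : ℕ → ℕ) (m : ℕ) :
    IsClosed {x : ℕ → Bool | ∀ n, m ≤ n → n + 1 ≤ cardBelow (g n + 1) x} := by
  have heq : {x : ℕ → Bool | ∀ n, m ≤ n → n + 1 ≤ cardBelow (g n + 1) x}
      = ⋂ n, {x : ℕ → Bool | m ≤ n → n + 1 ≤ cardBelow (g n + 1) x} := by
    ext x; simp [Set.mem_iInter]
  rw [heq]
  refine isClosed_iInter fun n => ?_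
  have heq2 : {x : ℕ → Bool | m ≤ n → n + 1 ≤ cardBelow (g n + 1) x}
      = (fun (x : ℕ → Bool) (k : Fin (g n + 1)) => x k) ⁻¹'
        {σ : Fin (g n + 1) → Bool |
          m ≤ n → n + 1 ≤ (Finset.univ.filter (fun k => σ k = true)).card} := rfl
  rw [heq2]
  exact (isClosed_discrete _).preimage (continuous_pi fun k => continuous_apply _)

lemma interior_C (g : ℕ → ℕ) (m : ℕ) :
    interior {x : ℕ → Bool | ∀ n, m ≤ n → n + 1 ≤ cardBelow (g n + 1) x} = ∅ := by
  rw [Set.eq_empty_iff_forall_notMem]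
  intro x hx
  obtain ⟨I, u, hIu, hsub⟩ := (isOpen_pi_iff.mp isOpen_interior) x hx
  set N0 : ℕ := I.sup id + 1 with hN0
  set y : ℕ → Bool := fun k => if k < N0 then x k else false with hy
  have hyI : y ∈ Set.pi (↑I : Set ℕ) u := by
    intro i hi
    have hiN : i < N0 := by
      have : i ≤ I.sup id := Finset.le_sup (f := id) hi
      omega
    have : y i = x i := by simp [hy, hiN]
    rw [this]
    exact (hIu i hi).2
  have hyC : y ∈ {x : ℕ → Bool | ∀ n, m ≤ n → n + 1 ≤ cardBelow (g n + 1) x} :=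
    interior_subset (hsub hyI)
  have hcard : cardBelow (g (max m N0) + 1) y ≤ N0 :=
    cardBelow_le (fun k hk => by simp only [hy]; rw [if_neg (by omega)])
  have := hyC (max m N0) (le_max_left _ _)
  have hN0le : N0 ≤ max m N0 := le_max_right _ _
  omega

/-- Cylinders are open. -/
lemma isOpen_cyl (N : ℕ) (s : ℕ → Bool) : IsOpen {x : ℕ → Bool | ∀ i < N, x i = s i} := by
  have heq : {x : ℕ → Bool | ∀ i < N, x i = s i}
      = ⋂ i ∈ Finset.range N, {x : ℕ → Bool | x i = s i} := by
    ext x; simp [Set.mem_iInter]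
  rw [heq]
  refine isOpen_biInter_finset fun i _ => ?_
  exact (isOpen_discrete {b : Bool | b = s i}).preimage (continuous_apply (A := fun _ : ℕ => Bool) i)

/-- Key extension lemma: given a closed nowhere dense `M` and a level `N`, there is a
level `N' > N` such that any finite condition below `N` can be extended up to `N'`
so as to avoid `M` entirely. -/
lemma key_ext {M : Set (ℕ → Bool)} (hM : IsClosed M) (hMi : interior M = ∅) (N : ℕ) :
    ∃ N' : ℕ, N < N' ∧ ∀ s : ℕ → Bool, ∃ t : ℕ → Bool,
      (∀ i, i < N → t i = s i) ∧ ∀ x : ℕ → Bool, (∀ i, i < N' → x i = t i) → x ∉ M := by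
  have hdense : Dense Mᶜ := interior_eq_empty_iff_dense_compl.mp hMi
  have hopen : IsOpen Mᶜ := hM.isOpen_compl
  have step : ∀ s : ℕ → Bool, ∃ t : ℕ → Bool, ∃ k : ℕ,
      (∀ i, i < N → t i = s i) ∧ ∀ x, (∀ i, i < k → x i = t i) → x ∉ M := by
    intro s
    obtain ⟨y, hyM, hys⟩ := hdense.exists_mem_open (isOpen_cyl N s) ⟨s, fun i _ => rfl⟩
    obtain ⟨I, u, hIu, hsub⟩ := (isOpen_pi_iff.mp hopen) y hyM
    refine ⟨y, I.sup id + 1, fun i hi => hys i hi, fun x hx => ?_⟩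
    have : x ∈ Set.pi (↑I : Set ℕ) u := by
      intro i hi
      have hiN : i < I.sup id + 1 := by
        have : i ≤ I.sup id := Finset.le_sup (f := id) hi
        omega
      rw [hx i hiN]
      exact (hIu i hi).2
    exact hsub this
  choose t k ht hk using step
  set ext : (Fin N → Bool) → (ℕ → Bool) := fun σ i => if h : i < N then σ ⟨i, h⟩ else false
    with hext
  refine ⟨(N + 1) ⊔ Finset.univ.sup (fun σ : Fin N → Bool => k (ext σ)), ?_, ?_⟩
  · exact lt_of_lt_of_le (Nat.lt_succ_self N) le_sup_left
  · intro s
    set σ : Fin N → Bool := fun j => s j with hσ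
    refine ⟨t (ext σ), fun i hi => ?_, fun x hx => ?_⟩
    · rw [ht (ext σ) i hi]
      simp [hext, hi, hσ]
    · refine hk (ext σ) x (fun i hik => hx i ?_)
      have h1 : k (ext σ) ≤ Finset.univ.sup (fun σ : Fin N → Bool => k (ext σ)) :=
        Finset.le_sup (f := fun σ : Fin N → Bool => k (ext σ)) (Finset.mem_univ σ)
      exact lt_of_lt_of_le hik (le_trans h1 le_sup_right)

/-- The interval endpoints built by recursion using `key_ext`. -/
noncomputable def seqN (M : ℕ → Set (ℕ → Bool))
    (h : ∀ k, IsClosed (M k) ∧ interior (M k) = ∅) : ℕ → ℕ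
  | 0 => 0
  | k + 1 => (key_ext (h k).1 (h k).2 (seqN M h k)).choose

lemma seqN_zero (M : ℕ → Set (ℕ → Bool)) (h : ∀ k, IsClosed (M k) ∧ interior (M k) = ∅) :
    seqN M h 0 = 0 := rfl

lemma seqN_lt (M : ℕ → Set (ℕ → Bool)) (h : ∀ k, IsClosed (M k) ∧ interior (M k) = ∅)
    (k : ℕ) : seqN M h k < seqN M h (k + 1) :=
  (key_ext (h k).1 (h k).2 (seqN M h k)).choose_spec.1

lemma seqN_spec (M : ℕ → Set (ℕ → Bool)) (h : ∀ k, IsClosed (M k) ∧ interior (M k) = ∅)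
    (k : ℕ) : ∀ s : ℕ → Bool, ∃ t : ℕ → Bool,
      (∀ i, i < seqN M h k → t i = s i) ∧
      ∀ x : ℕ → Bool, (∀ i, i < seqN M h (k + 1) → x i = t i) → x ∉ M k :=
  (key_ext (h k).1 (h k).2 (seqN M h k)).choose_spec.2

lemma seqN_strictMono (M : ℕ → Set (ℕ → Bool))
    (h : ∀ k, IsClosed (M k) ∧ interior (M k) = ∅) : StrictMono (seqN M h) :=
  strictMono_nat_of_lt_succ (seqN_lt M h)

/-- Every member of the filter hits all but finitely many of the intervals. -/
lemma hits (F : Set (Set ℕ)) (hF : IsFilterOnNat F)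
    (M : ℕ → Set (ℕ → Bool)) (h : ∀ k, IsClosed (M k) ∧ interior (M k) = ∅)
    (hmono : Monotone M) (hcov : chi '' F ⊆ ⋃ k, M k) :
    ∀ X ∈ F, ∃ K, ∀ k, K ≤ k →
      ∃ i ∈ X, seqN M h k ≤ i ∧ i < seqN M h (k + 1) := by
  intro X hX
  by_contra hcon
  push_neg at hcon
  set n : ℕ → ℕ := seqN M h with hn
  have nmono : StrictMono n := seqN_strictMono M h
  have nself : ∀ k, k ≤ n k := fun k => nmono.le_apply
  have n0 : n 0 = 0 := rfl
  have nlt : ∀ k, n k < n (k + 1) := fun k => seqN_lt M h k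
  set missed : ℕ → Prop := fun k => ∀ i ∈ X, ¬(n k ≤ i ∧ i < n (k + 1)) with hmissed
  have hmiss : ∀ K, ∃ k, K ≤ k ∧ missed k := by
    intro K
    obtain ⟨k, hKk, hk⟩ := hcon K
    refine ⟨k, hKk, fun i hi hcontra => ?_⟩
    exact absurd hcontra.2 (by simpa using hk i hi hcontra.1)
  choose T hT using fun k => seqN_spec M h k
  set z : ℕ → ℕ → Bool := fun k => Nat.rec (fun _ => true)
    (fun k zk => if missed k then (fun i => if i < n (k + 1) then T k zk i else true) else zk) k
    with hz
  have zsucc : ∀ k, z (k + 1) =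
      if missed k then (fun i => if i < n (k + 1) then T k (z k) i else true) else z k :=
    fun k => rfl
  have inv1 : ∀ k i, n k ≤ i → z k i = true := by
    intro k
    induction k with
    | zero => intro i _; rfl
    | succ k ih =>
      intro i hi
      rw [zsucc k]
      by_cases hm : missed k
      · rw [if_pos hm]
        exact if_neg (by omega)
      · rw [if_neg hm]
        exact ih i (le_trans (nlt k).le hi)
  have inv2 : ∀ k k', k ≤ k' → ∀ i, i < n k → z k' i = z k i := by
    intro k
    refine Nat.le_induction ?_ ?_
    · intro i _; rfl
    · intro k' hkk' ih i hik
      rw [zsucc k']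
      by_cases hm : missed k'
      · rw [if_pos hm]
        have hik1 : i < n (k' + 1) :=
          lt_of_lt_of_le hik (nmono.monotone (by omega))
        rw [if_pos hik1]
        have hik2 : i < n k' := lt_of_lt_of_le hik (nmono.monotone hkk')
        rw [(hT k' (z k')).1 i hik2]
        exact ih i hik
      · rw [if_neg hm]
        exact ih i hik
  set Z : ℕ → Bool := fun i => z (i + 1) i with hZ
  have Zagree : ∀ k i, i < n k → Z i = z k i := by
    intro k i hik
    rcases le_total k (i + 1) with hle | hle
    · exact inv2 k (i + 1) hle i hik
    · have hii : i < n (i + 1) := lt_of_lt_of_le (Nat.lt_succ_self i) (nself (i + 1))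
      exact (inv2 (i + 1) k hle i hii).symm
  have hZnot : ∀ k, missed k → Z ∉ M k := by
    intro k hm
    apply (hT k (z k)).2
    intro i hi
    rw [Zagree (k + 1) i hi, zsucc k, if_pos hm]
    exact if_pos hi
  have interval : ∀ i, ∃ k, n k ≤ i ∧ i < n (k + 1) := by
    intro i
    induction i with
    | zero => exact ⟨0, by omega, by have := nlt 0; omega⟩
    | succ i ih =>
      obtain ⟨k, h1, h2⟩ := ih
      rcases Nat.lt_or_ge (i + 1) (n (k + 1)) with hlt | hge
      · exact ⟨k, by omega, hlt⟩
      · have heq : i + 1 = n (k + 1) := by omega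
        exact ⟨k + 1, by omega, by have := nlt (k + 1); omega⟩
  set Y : Set ℕ := {i | Z i = true} with hY
  have hXY : X ⊆ Y := by
    intro i hiX
    obtain ⟨k, h1, h2⟩ := interval i
    have hnm : ¬ missed k := fun hm => hm i hiX ⟨h1, h2⟩
    have : Z i = true := by
      rw [Zagree (k + 1) i h2, zsucc k, if_neg hnm]
      exact inv1 k i h1
    exact this
  have hYF : Y ∈ F := hF.2.1 X Y hX hXY
  have hchi : chi Y = Z := by
    funext i
    by_cases hb : Z i = true
    · have : i ∈ Y := hb
      simp [chi, this, hb]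
    · have hb' : Z i = false := by
        cases hzi : Z i
        · rfl
        · exact absurd hzi hb
      have : i ∉ Y := by simpa [hY] using hb
      simp [chi, this, hb']
  have hZmem : Z ∈ ⋃ k, M k := hcov ⟨Y, hYF, hchi⟩
  obtain ⟨j, hj⟩ := Set.mem_iUnion.mp hZmem
  obtain ⟨k, hjk, hmk⟩ := hmiss j
  exact hZnot k hmk (hmono hjk hj)

lemma nwdUnion {X : Type*} [TopologicalSpace X] {s t : Set X}
    (hs : IsNowhereDense s) (ht : IsNowhereDense t) : IsNowhereDense (s ∪ t) := by
  rw [IsNowhereDense, closure_union, interior_eq_empty_iff_dense_compl, Set.compl_union]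
  exact Dense.inter_of_isOpen_left
    (interior_eq_empty_iff_dense_compl.mp hs)
    (interior_eq_empty_iff_dense_compl.mp ht)
    isClosed_closure.isOpen_compl

end MFAux

/-- A filter on ω is meager iff the family of increasing enumerations of its
members is bounded in `(ω^ω, ≤*)`. -/
theorem meager_filter_iff_enumerations_bounded (F : Set (Set ℕ)) (hF : IsFilterOnNat F) :
    IsMeagre (chi '' F) ↔
      ∃ g : ℕ → ℕ, ∀ X ∈ F, ∀ e : ℕ → ℕ, StrictMono e → Set.range e = X →
        ∀ᶠ n in Filter.atTop, e n ≤ g n := by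
  constructor
  · -- meager → bounded
    intro hm
    obtain ⟨S, hS_nwd, hS_count, hS_cov⟩ := isMeagre_iff_countable_union_isNowhereDense.mp hm
    obtain ⟨f, hf⟩ := (hS_count.insert ∅).exists_eq_range (Set.insert_nonempty _ _)
    have hf_nwd : ∀ i, IsNowhereDense (f i) := by
      intro i
      have : f i ∈ insert (∅ : Set (ℕ → Bool)) S := by rw [hf]; exact Set.mem_range_self i
      rcases Set.mem_insert_iff.mp this with h | h
      · rw [h]; exact isNowhereDense_empty
      · exact hS_nwd _ h
    set U : ℕ → Set (ℕ → Bool) := fun k => ⋃ i ∈ Finset.range (k + 1), f i with hU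
    have hU_nwd : ∀ k, IsNowhereDense (U k) := by
      intro k
      induction k with
      | zero => simpa [hU] using hf_nwd 0
      | succ k ih =>
        have : U (k + 1) = U k ∪ f (k + 1) := by
          ext x
          simp only [hU, Set.mem_iUnion, Finset.mem_range, Set.mem_union]
          constructor
          · rintro ⟨i, hi, hx⟩
            rcases Nat.lt_or_ge i (k + 1) with hik | hik
            · exact Or.inl ⟨i, hik, hx⟩
            · have : i = k + 1 := by omega
              subst this; exact Or.inr hx
          · rintro (⟨i, hi, hx⟩ | hx)
            · exact ⟨i, by omega, hx⟩
            · exact ⟨k + 1, by omega, hx⟩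
        rw [this]
        exact MFAux.nwdUnion ih (hf_nwd (k + 1))
    set M : ℕ → Set (ℕ → Bool) := fun k => closure (U k) with hM
    have hMk : ∀ k, IsClosed (M k) ∧ interior (M k) = ∅ :=
      fun k => ⟨isClosed_closure, hU_nwd k⟩
    have hMmono : Monotone M := by
      intro a b hab
      apply closure_mono
      intro x hx
      simp only [hU, Set.mem_iUnion, Finset.mem_range] at hx ⊢
      obtain ⟨i, hi, hx⟩ := hx
      exact ⟨i, by omega, hx⟩
    have hMcov : chi '' F ⊆ ⋃ k, M k := by
      intro x hx
      obtain ⟨t, htS, hxt⟩ := hS_cov hx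
      have : t ∈ Set.range f := by rw [← hf]; exact Set.mem_insert_of_mem _ htS
      obtain ⟨i, rfl⟩ := this
      refine Set.mem_iUnion.mpr ⟨i, ?_⟩
      apply subset_closure
      simp only [hU, Set.mem_iUnion, Finset.mem_range]
      exact ⟨i, by omega, hxt⟩
    refine ⟨fun j => MFAux.seqN M hMk (2 * j + 2), ?_⟩
    intro X hX e he hrange
    obtain ⟨K, hK⟩ := MFAux.hits F hF M hMk hMmono hMcov X hX
    have claim : ∀ d, e d < MFAux.seqN M hMk (K + d + 1) := by
      intro d
      induction d with
      | zero =>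
        obtain ⟨i, hiX, hlo, hhi⟩ := hK K le_rfl
        have : ∃ m, e m = i := by rw [← Set.mem_range, hrange]; exact hiX
        obtain ⟨m, rfl⟩ := this
        exact lt_of_le_of_lt (he.monotone (Nat.zero_le m)) hhi
      | succ d ih =>
        obtain ⟨i, hiX, hlo, hhi⟩ := hK (K + d + 1) (by omega)
        have : ∃ m, e m = i := by rw [← Set.mem_range, hrange]; exact hiX
        obtain ⟨m, rfl⟩ := this
        have hdm : d < m := he.lt_iff_lt.mp (lt_of_lt_of_le ih hlo)
        have h1 : e (d + 1) ≤ e m := he.monotone hdm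
        have h2 : K + (d + 1) + 1 = K + d + 1 + 1 := by omega
        rw [h2]
        exact lt_of_le_of_lt h1 hhi
    rw [Filter.eventually_atTop]
    refine ⟨K, fun j hj => ?_⟩
    have h1 := claim j
    have h2 : MFAux.seqN M hMk (K + j + 1) ≤ MFAux.seqN M hMk (2 * j + 2) :=
      (MFAux.seqN_strictMono M hMk).monotone (by omega)
    show e j ≤ MFAux.seqN M hMk (2 * j + 2)
    omega
  · -- bounded → meager
    rintro ⟨g, hg⟩
    rw [isMeagre_iff_countable_union_isNowhereDense]
    refine ⟨Set.range (fun m =>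
      {x : ℕ → Bool | ∀ n, m ≤ n → n + 1 ≤ MFAux.cardBelow (g n + 1) x}),
      ?_, Set.countable_range _, ?_⟩
    · rintro t ⟨m, rfl⟩
      exact (MFAux.isClosed_C g m).isNowhereDense_iff.mpr (MFAux.interior_C g m)
    · rintro x ⟨A, hA, rfl⟩
      have hinf : A.Infinite := by
        by_contra hfin
        rw [Set.not_infinite] at hfin
        have h1 : Aᶜ ∈ F := hF.1 Aᶜ (by rwa [compl_compl])
        have h2 : A ∩ Aᶜ ∈ F := hF.2.2.1 _ _ hA h1
        rw [Set.inter_compl_self] at h2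
        exact hF.2.2.2 h2
      have hinf' : {n | (fun x => x ∈ A) n}.Infinite := by rwa [Set.setOf_mem_eq]
      set e : ℕ → ℕ := Nat.nth (· ∈ A) with he
      have hmono : StrictMono e := Nat.nth_strictMono hinf'
      have hrange : Set.range e = A := by
        rw [he, Nat.range_nth_of_infinite hinf']
        exact Set.setOf_mem_eq
      obtain ⟨m, hm⟩ := Filter.eventually_atTop.mp (hg A hA e hmono hrange)
      refine Set.mem_sUnion.mpr ⟨_, Set.mem_range_self m, ?_⟩
      intro n hn
      refine MFAux.le_cardBelow hmono hrange ?_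
      have := hm n hn
      omega
end

section
/- Every infinite almost disjoint family A is Katětov below FIN×FIN: there is a function f : ω×ω → ω such that for every X ∈ I(A), the preimage f⁻¹(X) belongs to the ideal FIN×FIN. -/
open Set Filter

def IsADFamily (A : Set (Set ℕ)) : Prop :=
  (∀ a ∈ A, a.Infinite) ∧ ∀ a ∈ A, ∀ b ∈ A, a ≠ b → (a ∩ b).Finite

def adIdeal (A : Set (Set ℕ)) : Set (Set ℕ) :=
  {X | ∃ F : Finset (Set ℕ), ↑F ⊆ A ∧ (X \ ⋃₀ (↑F : Set (Set ℕ))).Finite}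

/-- The ideal FIN×FIN on ω×ω: sets with only finitely many infinite columns. -/
def FinTimesFin : Set (Set (ℕ × ℕ)) :=
  {A | {n : ℕ | {m : ℕ | (n, m) ∈ A}.Infinite}.Finite}

/-- Every infinite AD family is Katětov below FIN×FIN. -/
theorem adIdeal_katetov_below_finTimesFin (A : Set (Set ℕ)) (hA : IsADFamily A)
    (hinf : A.Infinite) :
    ∃ f : ℕ × ℕ → ℕ, ∀ X ∈ adIdeal A, f ⁻¹' X ∈ FinTimesFin := by
  classical
  obtain ⟨hinfA, hAD⟩ := hA
  set g : ℕ ↪ ↥A := hinf.natEmbedding A with hg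
  have hgmem : ∀ n, (g n : Set ℕ) ∈ A := fun n => (g n).2
  have hginf : ∀ n, ((g n : Set ℕ)).Infinite := fun n => hinfA _ (hgmem n)
  let e : ∀ n, ℕ ↪ ↥(g n : Set ℕ) := fun n => (hginf n).natEmbedding _
  refine ⟨fun p => (e p.1 p.2 : ℕ), ?_⟩
  rintro X ⟨F, hFA, hXfin⟩
  have key : {n : ℕ | {m : ℕ | (n, m) ∈ (fun p : ℕ × ℕ => ((e p.1 p.2 : ℕ))) ⁻¹' X}.Infinite}
      ⊆ {n : ℕ | (g n : Set ℕ) ∈ (F : Set (Set ℕ))} := by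
    intro n hn
    have hinj : Function.Injective (fun m => (e n m : ℕ)) := by
      intro a b hab
      exact (e n).injective (Subtype.ext hab)
    have himg : ((fun m => (e n m : ℕ)) '' {m | (e n m : ℕ) ∈ X}).Infinite :=
      Set.Infinite.image hinj.injOn hn
    have hsub : (fun m => (e n m : ℕ)) '' {m | (e n m : ℕ) ∈ X} ⊆ (g n : Set ℕ) ∩ X := by
      rintro _ ⟨m, hm, rfl⟩
      exact ⟨(e n m).2, hm⟩
    have h1 : ((g n : Set ℕ) ∩ X).Infinite := himg.mono hsub
    have h2 : ((g n : Set ℕ) ∩ ⋃₀ (↑F : Set (Set ℕ))).Infinite := by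
      by_contra h2
      apply h1
      have hss : (g n : Set ℕ) ∩ X ⊆ ((g n : Set ℕ) ∩ ⋃₀ ↑F) ∪ (X \ ⋃₀ ↑F) := by
        rintro x ⟨hx1, hx2⟩
        by_cases h : x ∈ ⋃₀ (↑F : Set (Set ℕ))
        · exact Or.inl ⟨hx1, h⟩
        · exact Or.inr ⟨hx2, h⟩
      exact ((Set.not_infinite.mp h2).union hXfin).subset hss
    have hex : ∃ a ∈ F, ((g n : Set ℕ) ∩ a).Infinite := by
      by_contra h
      push_neg at h
      apply h2
      have hss : (g n : Set ℕ) ∩ ⋃₀ ↑F ⊆ ⋃ a ∈ F, ((g n : Set ℕ) ∩ a) := by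
        rintro x ⟨hx1, a, ha, hxa⟩
        exact Set.mem_biUnion ha ⟨hx1, hxa⟩
      exact (Set.Finite.biUnion F.finite_toSet
        (fun a ha => (h a ha))).subset hss
    obtain ⟨a, haF, hainf⟩ := hex
    have heq : (g n : Set ℕ) = a := by
      by_contra hne
      exact hainf (hAD _ (hgmem n) a (hFA haF) hne)
    simpa [heq] using haF
  have hfin : Set.Finite {n : ℕ | (g n : Set ℕ) ∈ (F : Set (Set ℕ))} := by
    have hginj : Function.Injective (fun n => (g n : Set ℕ)) := by
      intro a b hab
      exact g.injective (Subtype.ext hab)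
    exact Set.Finite.preimage hginj.injOn F.finite_toSet
  exact hfin.subset key
end

section
/- The least cardinality of a block-splitting family equals max{b, s}. -/
open Set Filter

def LeStar (f g : ℕ → ℕ) : Prop := ∀ᶠ n in Filter.atTop, f n ≤ g n

def UnboundedFam (B : Set (ℕ → ℕ)) : Prop := ¬ ∃ g : ℕ → ℕ, ∀ f ∈ B, LeStar f g

noncomputable def bCard : Cardinal :=
  sInf {c : Cardinal | ∃ B : Set (ℕ → ℕ), UnboundedFam B ∧ Cardinal.mk B = c}

def Splits (S X : Set ℕ) : Prop := (X ∩ S).Infinite ∧ (X \ S).Infinite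

def SplittingFam (S : Set (Set ℕ)) : Prop :=
  (∀ s ∈ S, s.Infinite) ∧ ∀ X : Set ℕ, X.Infinite → ∃ s ∈ S, Splits s X

noncomputable def sCard : Cardinal :=
  sInf {c : Cardinal | ∃ S : Set (Set ℕ), SplittingFam S ∧ Cardinal.mk S = c}

/-- `S` block-splits the interval partition coded by `p`. -/
def BlockSplits (S : Set ℕ) (p : ℕ → ℕ) : Prop :=
  {n : ℕ | Set.Ico (p n) (p (n + 1)) ⊆ S}.Infinite ∧
  {n : ℕ | Set.Ico (p n) (p (n + 1)) ∩ S = ∅}.Infinite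

/-- A block-splitting family. -/
def BlockSplittingFam (S : Set (Set ℕ)) : Prop :=
  (∀ s ∈ S, s.Infinite) ∧
  ∀ p : ℕ → ℕ, IntervalPartition p → ∃ s ∈ S, BlockSplits s p

namespace BSAux

/-! ### basic iterate machinery -/

def iter (f : ℕ → ℕ) (n : ℕ) : ℕ := f^[n] 0

lemma iter_zero (f : ℕ → ℕ) : iter f 0 = 0 := rfl

lemma iter_succ (f : ℕ → ℕ) (n : ℕ) : iter f (n + 1) = f (iter f n) :=
  Function.iterate_succ_apply' f n 0

lemma iter_strictMono {f : ℕ → ℕ} (hf : ∀ k, k < f k) : StrictMono (iter f) :=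
  strictMono_nat_of_lt_succ fun n => by rw [iter_succ]; exact hf _

lemma exists_idx {q : ℕ → ℕ} (h0 : q 0 = 0) (hq : StrictMono q) (k : ℕ) :
    ∃ n, q n ≤ k ∧ k < q (n + 1) := by
  classical
  set P : ℕ → Prop := fun n => q n ≤ k with hP
  have h00 : P 0 := by simp [hP, h0]
  refine ⟨Nat.findGreatest P k, Nat.findGreatest_spec (Nat.zero_le k) h00, ?_⟩
  by_contra h
  push_neg at h
  have h1 : P (Nat.findGreatest P k + 1) := h
  have h2 : Nat.findGreatest P k + 1 ≤ k :=
    le_trans (hq.le_apply) h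
  exact absurd (Nat.le_findGreatest h2 h1) (by omega)

lemma idx_unique {q : ℕ → ℕ} (hq : StrictMono q) {n m x : ℕ}
    (h1 : q n ≤ x) (h2 : x < q (n + 1)) (h3 : q m ≤ x) (h4 : x < q (m + 1)) : n = m := by
  rcases lt_trichotomy n m with h | h | h
  · exact absurd (le_trans (hq.monotone (by omega : n + 1 ≤ m)) h3) (by omega)
  · exact h
  · exact absurd (le_trans (hq.monotone (by omega : m + 1 ≤ n)) h1) (by omega)

lemma infinite_of_image {A C : Set ℕ} (hA : A.Infinite) (g : ℕ → ℕ)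
    (hmem : ∀ n ∈ A, g n ∈ C) (hinj : Set.InjOn g A) : C.Infinite :=
  Set.Infinite.mono (Set.image_subset_iff.mpr hmem) (hA.image hinj)

/-! ### monotone majorization -/

def mkfun (f : ℕ → ℕ) : ℕ → ℕ := fun k => k + 1 + (Finset.range (k + 1)).sum f

lemma lt_mkfun (f : ℕ → ℕ) (k : ℕ) : k < mkfun f k := by
  simp [mkfun]; omega

lemma le_mkfun (f : ℕ → ℕ) (k : ℕ) : f k ≤ mkfun f k := by
  have : f k ≤ (Finset.range (k + 1)).sum f :=
    Finset.single_le_sum (fun i _ => Nat.zero_le (f i)) (Finset.self_mem_range_succ k)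
  simp [mkfun]; omega

lemma mkfun_strictMono (f : ℕ → ℕ) : StrictMono (mkfun f) := by
  apply strictMono_nat_of_lt_succ
  intro k
  have : (Finset.range (k + 1)).sum f ≤ (Finset.range (k + 2)).sum f :=
    Finset.sum_le_sum_of_subset (Finset.range_subset_range.mpr (by omega))
  show k + 1 + (Finset.range (k + 1)).sum f < (k + 1) + 1 + (Finset.range (k + 1 + 1)).sum f
  have h2 : (Finset.range (k + 1 + 1)).sum f = (Finset.range (k + 2)).sum f := by norm_num
  omega

lemma mkfun_monotone (f : ℕ → ℕ) : Monotone (mkfun f) := (mkfun_strictMono f).monotone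

/-! ### block index -/

def blockIdx (p : ℕ → ℕ) (k : ℕ) : ℕ := Nat.findGreatest (fun n => p n ≤ k) k

lemma blockIdx_le {p : ℕ → ℕ} (hp : IntervalPartition p) (k : ℕ) : p (blockIdx p k) ≤ k := by
  classical
  exact Nat.findGreatest_spec (P := fun n => p n ≤ k) (Nat.zero_le k)
    (le_of_eq_of_le hp.1 (Nat.zero_le k))

lemma lt_blockIdx_succ {p : ℕ → ℕ} (hp : IntervalPartition p) (k : ℕ) :
    k < p (blockIdx p k + 1) := by
  classical
  by_contra h
  push_neg at h
  have h2 : blockIdx p k + 1 ≤ k := le_trans hp.2.le_apply h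
  have h3 := Nat.le_findGreatest (P := fun n => p n ≤ k) h2 h
  have h4 : blockIdx p k + 1 ≤ blockIdx p k := h3
  omega

lemma blockIdx_monotone {p : ℕ → ℕ} (hp : IntervalPartition p) : Monotone (blockIdx p) := by
  classical
  intro k k' hk
  exact Nat.le_findGreatest (le_trans (le_trans hp.2.le_apply (blockIdx_le hp k)) hk)
    (le_trans (blockIdx_le hp k) hk)

/-! ### nonemptiness witnesses -/

lemma unbounded_univ : UnboundedFam (Set.univ : Set (ℕ → ℕ)) := by
  rintro ⟨g, hg⟩
  have h := hg (fun n => g n + 1) (Set.mem_univ _)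
  obtain ⟨n, hn⟩ := h.exists
  simp at hn

lemma bset_nonempty :
    {c : Cardinal | ∃ B : Set (ℕ → ℕ), UnboundedFam B ∧ Cardinal.mk B = c}.Nonempty :=
  ⟨_, Set.univ, unbounded_univ, rfl⟩

lemma splitting_univ : SplittingFam {s : Set ℕ | s.Infinite} := by
  constructor
  · exact fun s hs => hs
  · intro X hX
    set e := hX.natEmbedding X with he
    refine ⟨Set.range (fun n => (e (2 * n) : ℕ)), ?_, ?_, ?_⟩
    · apply Set.infinite_range_of_injective
      intro a b hab
      have := e.injective (Subtype.ext hab)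
      omega
    · apply infinite_of_image (Set.infinite_univ) (fun n => (e (2 * n) : ℕ))
      · intro n _
        exact ⟨(e (2 * n)).2, ⟨n, rfl⟩⟩
      · intro a _ b _ hab
        have := e.injective (Subtype.ext hab)
        omega
    · apply infinite_of_image (Set.infinite_univ) (fun n => (e (2 * n + 1) : ℕ))
      · intro n _
        refine ⟨(e (2 * n + 1)).2, ?_⟩
        rintro ⟨m, hm⟩
        have := e.injective (Subtype.ext hm.symm)
        omega
      · intro a _ b _ hab
        have := e.injective (Subtype.ext hab)
        omega

lemma sset_nonempty :
    {c : Cardinal | ∃ S : Set (Set ℕ), SplittingFam S ∧ Cardinal.mk S = c}.Nonempty :=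
  ⟨_, _, splitting_univ, rfl⟩

lemma blockSplitting_univ : BlockSplittingFam {s : Set ℕ | s.Infinite} := by
  constructor
  · exact fun s hs => hs
  · intro p hp
    refine ⟨⋃ n, Set.Ico (p (2 * n)) (p (2 * n + 1)), ?_, ?_, ?_⟩
    · apply infinite_of_image (Set.infinite_univ) (fun n => p (2 * n))
      · intro n _
        exact Set.mem_iUnion.mpr ⟨n, le_refl _, hp.2 (by omega)⟩
      · intro a _ b _ hab
        have := hp.2.injective hab
        omega
    · apply infinite_of_image (Set.infinite_univ) (fun n => 2 * n)
      · intro n _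
        intro x hx
        exact Set.mem_iUnion.mpr ⟨n, hx.1, lt_of_lt_of_le hx.2 (hp.2.monotone (by omega))⟩
      · intro a _ b _ hab; dsimp only at hab; omega
    · apply infinite_of_image (Set.infinite_univ) (fun n => 2 * n + 1)
      · intro n _
        ext x
        simp only [Set.mem_inter_iff, Set.mem_iUnion, Set.mem_empty_iff_false, iff_false]
        rintro ⟨hx1, m, hx2⟩
        have := idx_unique hp.2 hx1.1 (lt_of_lt_of_le hx1.2 (hp.2.monotone (le_refl _)))
          hx2.1 (lt_of_lt_of_le hx2.2 (hp.2.monotone (by omega)))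
        omega
      · intro a _ b _ hab; dsimp only at hab; omega

lemma blockset_nonempty :
    {c : Cardinal | ∃ S : Set (Set ℕ), BlockSplittingFam S ∧ Cardinal.mk S = c}.Nonempty :=
  ⟨_, _, blockSplitting_univ, rfl⟩

lemma aleph0_le_bCard : Cardinal.aleph0 ≤ bCard := by
  apply le_csInf bset_nonempty
  rintro c ⟨B, hB, rfl⟩
  rw [← Cardinal.infinite_iff]
  by_contra hfin
  rw [not_infinite_iff_finite, Set.finite_coe_iff] at hfin
  classical
  apply hB
  refine ⟨fun n => hfin.toFinset.sup (fun f => f n), fun f hf => Eventually.of_forall fun n => ?_⟩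
  exact Finset.le_sup (f := fun f => f n) (hfin.mem_toFinset.mpr hf)

/-! ### lower bounds: every block-splitting family yields splitting and unbounded families -/

lemma blockFam_splitting {T : Set (Set ℕ)} (hT : BlockSplittingFam T) : SplittingFam T := by
  classical
  refine ⟨hT.1, fun X hX => ?_⟩
  let c : ℕ → ℕ := fun k => (hX.exists_gt k).choose
  have hcX : ∀ k, c k ∈ X := fun k => (hX.exists_gt k).choose_spec.1
  have hck : ∀ k, k < c k := fun k => (hX.exists_gt k).choose_spec.2
  let q := iter (fun k => c k + 1)
  have hq : StrictMono q := iter_strictMono (fun k => by have := hck k; omega)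
  have hmem : ∀ n, c (q n) ∈ Set.Ico (q n) (q (n + 1)) := by
    intro n
    refine ⟨le_of_lt (hck _), ?_⟩
    have : q (n + 1) = c (q n) + 1 := iter_succ _ n
    omega
  obtain ⟨t, htT, ht1, ht2⟩ := hT.2 q ⟨rfl, hq⟩
  refine ⟨t, htT, ?_, ?_⟩
  · apply infinite_of_image ht1 (fun n => c (q n))
    · exact fun n hn => ⟨hcX _, hn (hmem n)⟩
    · intro a _ b _ hab
      dsimp only at hab
      have h1 := hmem a
      rw [hab] at h1
      exact idx_unique hq h1.1 h1.2 (hmem b).1 (hmem b).2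
  · apply infinite_of_image ht2 (fun n => c (q n))
    · intro n hn
      refine ⟨hcX _, fun hmt => ?_⟩
      have : c (q n) ∈ Set.Ico (q n) (q (n + 1)) ∩ t := ⟨hmem n, hmt⟩
      rw [hn] at this
      exact this
    · intro a _ b _ hab
      dsimp only at hab
      have h1 := hmem a
      rw [hab] at h1
      exact idx_unique hq h1.1 h1.2 (hmem b).1 (hmem b).2

noncomputable def nextSplit (t : Set ℕ) (k : ℕ) : ℕ :=
  sInf {m | k < m ∧ (∃ x ∈ t, k ≤ x ∧ x < m) ∧ (∃ y ∉ t, k ≤ y ∧ y < m)}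

lemma nextSplit_spec {t : Set ℕ} (ht : t.Infinite) (htc : tᶜ.Infinite) (k : ℕ) :
    k < nextSplit t k ∧ (∃ x ∈ t, k ≤ x ∧ x < nextSplit t k) ∧
      (∃ y ∉ t, k ≤ y ∧ y < nextSplit t k) := by
  have hne : {m | k < m ∧ (∃ x ∈ t, k ≤ x ∧ x < m) ∧ (∃ y ∉ t, k ≤ y ∧ y < m)}.Nonempty := by
    obtain ⟨x, hx, hxk⟩ := ht.exists_gt k
    obtain ⟨y, hy, hyk⟩ := htc.exists_gt k
    exact ⟨max x y + 1, by omega, ⟨x, hx, by omega⟩, ⟨y, hy, by omega⟩⟩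
  exact Nat.sInf_mem hne

lemma blockFam_unbounded {T : Set (Set ℕ)} (hT : BlockSplittingFam T) :
    UnboundedFam (nextSplit '' T) := by
  rintro ⟨g, hg⟩
  set G := mkfun g with hGdef
  set p := iter G with hpdef
  have hp : IntervalPartition p := ⟨rfl, iter_strictMono (lt_mkfun g)⟩
  obtain ⟨t, htT, ht1, ht2⟩ := hT.2 p hp
  have htinf : t.Infinite := hT.1 t htT
  by_cases htc : tᶜ.Infinite
  · have hL := hg (nextSplit t) ⟨t, htT, rfl⟩
    obtain ⟨K, hK⟩ := eventually_atTop.mp hL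
    obtain ⟨n, hn, hnK⟩ := ht1.exists_gt K
    have hpn : K ≤ p n := le_trans (le_of_lt hnK) hp.2.le_apply
    obtain ⟨hlt, hx, y, hy, hyk, hym⟩ := nextSplit_spec htinf htc (p n)
    have h2 : nextSplit t (p n) ≤ g (p n) := hK _ hpn
    have h3 : y < p (n + 1) := by
      have h4 := le_mkfun g (p n)
      have h5 : p (n + 1) = G (p n) := iter_succ G n
      have h6 : G (p n) = mkfun g (p n) := rfl
      omega
    exact hy (hn ⟨hyk, h3⟩)
  · rw [Set.not_infinite] at htc
    have hsub : {n | Set.Ico (p n) (p (n + 1)) ∩ t = ∅} ⊆ p ⁻¹' tᶜ := by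
      intro n hn hmem
      have hpn : p n ∈ Set.Ico (p n) (p (n + 1)) ∩ t :=
        ⟨⟨le_refl _, hp.2 (by omega)⟩, hmem⟩
      rw [hn] at hpn
      exact hpn
    exact ht2 ((htc.preimage (hp.2.injective.injOn)).subset hsub)

lemma bCard_le_blockFam {T : Set (Set ℕ)} (hT : BlockSplittingFam T) :
    bCard ≤ Cardinal.mk T :=
  le_trans (csInf_le' ⟨_, blockFam_unbounded hT, rfl⟩) Cardinal.mk_image_le

lemma sCard_le_blockFam {T : Set (Set ℕ)} (hT : BlockSplittingFam T) :
    sCard ≤ Cardinal.mk T :=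
  csInf_le' ⟨T, blockFam_splitting hT, rfl⟩

/-! ### the key lemma for the upper bound -/

lemma key_unbounded {B : Set (ℕ → ℕ)} (hB : UnboundedFam B)
    (hB1 : ∀ f ∈ B, StrictMono f) (hB2 : ∀ f ∈ B, ∀ k, k < f k)
    {p : ℕ → ℕ} (hp : IntervalPartition p) :
    ∃ f ∈ B,
      {n | ∃ m, Set.Ico (p m) (p (m + 1)) ⊆ Set.Ico (iter f n) (iter f (n + 1))}.Infinite := by
  by_contra h
  push_neg at h
  apply hB
  set g : ℕ → ℕ := fun k => p (blockIdx p k + 2) with hg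
  have hgm : Monotone g := by
    intro a b hab
    exact hp.2.monotone (by have := blockIdx_monotone hp hab; omega)
  refine ⟨fun k => g (g k), fun f hf => ?_⟩
  have hfin : {n | ∃ m, Set.Ico (p m) (p (m + 1)) ⊆
      Set.Ico (iter f n) (iter f (n + 1))}.Finite := h f hf
  obtain ⟨N, hN⟩ := hfin.bddAbove
  set q := iter f with hqd
  have hqs : StrictMono q := iter_strictMono (hB2 f hf)
  have hnb : ∀ n, N < n → q (n + 1) < g (q n) := by
    intro n hn
    by_contra hcon
    push_neg at hcon
    have hj2 : q n < p (blockIdx p (q n) + 1) := lt_blockIdx_succ hp _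
    have hmem : n ∈ {n | ∃ m, Set.Ico (p m) (p (m + 1)) ⊆
        Set.Ico (iter f n) (iter f (n + 1))} := by
      refine ⟨blockIdx p (q n) + 1, fun x hx => ?_⟩
      refine ⟨le_trans (le_of_lt hj2) hx.1, lt_of_lt_of_le hx.2 ?_⟩
      exact le_trans (le_of_eq rfl) hcon
    exact absurd (hN hmem) (by omega)
  rw [LeStar, eventually_atTop]
  refine ⟨q (N + 1), fun k hk => ?_⟩
  obtain ⟨n, hn1, hn2⟩ := exists_idx rfl hqs k
  have hNn : N + 1 ≤ n := by
    by_contra hc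
    push_neg at hc
    have : q (n + 1) ≤ q (N + 1) := hqs.monotone (by omega)
    omega
  have e1 : f k < q (n + 2) := by
    have h5 : q (n + 2) = f (q (n + 1)) := iter_succ f (n + 1)
    rw [h5]
    exact hB1 f hf hn2
  have e2 : q (n + 2) < g (q (n + 1)) := hnb (n + 1) (by omega)
  have e3 : q (n + 1) < g (q n) := hnb n (by omega)
  have e4 : g (q (n + 1)) ≤ g (g (q n)) := hgm (le_of_lt e3)
  have e5 : g (g (q n)) ≤ g (g k) := hgm (hgm hn1)
  omega

/-! ### upper bound construction -/

def blockUnion (f : ℕ → ℕ) (s : Set ℕ) : Set ℕ :=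
  ⋃ n ∈ s, Set.Ico (iter f n) (iter f (n + 1))

lemma mem_blockUnion {f : ℕ → ℕ} {s : Set ℕ} {x : ℕ} :
    x ∈ blockUnion f s ↔ ∃ n ∈ s, x ∈ Set.Ico (iter f n) (iter f (n + 1)) := by
  simp only [blockUnion, Set.mem_iUnion, exists_prop]

lemma upper_bound_exists :
    ∃ T : Set (Set ℕ), BlockSplittingFam T ∧ Cardinal.mk T ≤ max bCard sCard := by
  classical
  obtain ⟨B, hB, hBc⟩ := csInf_mem bset_nonempty
  obtain ⟨S, hS, hSc⟩ := csInf_mem sset_nonempty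
  set Bh := mkfun '' B with hBh
  have hBh1 : ∀ f ∈ Bh, StrictMono f := by rintro f ⟨f0, _, rfl⟩; exact mkfun_strictMono f0
  have hBh2 : ∀ f ∈ Bh, ∀ k, k < f k := by rintro f ⟨f0, _, rfl⟩; exact lt_mkfun f0
  have hBhu : UnboundedFam Bh := by
    rintro ⟨g, hg⟩
    apply hB
    refine ⟨g, fun f hf => ?_⟩
    have h1 := hg (mkfun f) ⟨f, hf, rfl⟩
    exact h1.mono fun n hn => le_trans (le_mkfun f n) hn
  refine ⟨Set.image2 blockUnion Bh S, ⟨?_, ?_⟩, ?_⟩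
  · rintro t ⟨f, hf, s, hs, rfl⟩
    apply infinite_of_image (hS.1 s hs) (iter f)
    · intro n hn
      exact mem_blockUnion.mpr ⟨n, hn, le_refl _, iter_strictMono (hBh2 f hf) (by omega)⟩
    · exact ((iter_strictMono (hBh2 f hf)).injective).injOn
  · intro p hp
    obtain ⟨f, hf, hX⟩ := key_unbounded hBhu hBh1 hBh2 hp
    obtain ⟨s, hs, hsp⟩ := hS.2 _ hX
    refine ⟨blockUnion f s, Set.mem_image2_of_mem hf hs, ?_, ?_⟩
    · let m : ℕ → ℕ := fun n =>
        if h : ∃ m, Set.Ico (p m) (p (m + 1)) ⊆ Set.Ico (iter f n) (iter f (n + 1))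
        then h.choose else 0
      have hm : ∀ n ∈ {n | ∃ m, Set.Ico (p m) (p (m + 1)) ⊆
          Set.Ico (iter f n) (iter f (n + 1))},
          Set.Ico (p (m n)) (p (m n + 1)) ⊆ Set.Ico (iter f n) (iter f (n + 1)) := by
        intro n hn
        have hn' : ∃ m, Set.Ico (p m) (p (m + 1)) ⊆ Set.Ico (iter f n) (iter f (n + 1)) := hn
        dsimp only [m]
        rw [dif_pos hn']
        exact hn'.choose_spec
      have hmne : ∀ n, p (m n) ∈ Set.Ico (p (m n)) (p (m n + 1)) :=
        fun n => ⟨le_refl _, hp.2 (by omega)⟩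
      apply infinite_of_image hsp.1 m
      · intro n hn x hx
        exact mem_blockUnion.mpr ⟨n, hn.2, hm n hn.1 hx⟩
      · intro a ha b hb hab
        have h1 := hm a ha.1 (hmne a)
        have h2 := hm b hb.1 (hmne b)
        rw [hab] at h1
        exact idx_unique (iter_strictMono (hBh2 f hf)) h1.1 h1.2 h2.1 h2.2
    · let m : ℕ → ℕ := fun n =>
        if h : ∃ m, Set.Ico (p m) (p (m + 1)) ⊆ Set.Ico (iter f n) (iter f (n + 1))
        then h.choose else 0
      have hm : ∀ n ∈ {n | ∃ m, Set.Ico (p m) (p (m + 1)) ⊆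
          Set.Ico (iter f n) (iter f (n + 1))},
          Set.Ico (p (m n)) (p (m n + 1)) ⊆ Set.Ico (iter f n) (iter f (n + 1)) := by
        intro n hn
        have hn' : ∃ m, Set.Ico (p m) (p (m + 1)) ⊆ Set.Ico (iter f n) (iter f (n + 1)) := hn
        dsimp only [m]
        rw [dif_pos hn']
        exact hn'.choose_spec
      have hmne : ∀ n, p (m n) ∈ Set.Ico (p (m n)) (p (m n + 1)) :=
        fun n => ⟨le_refl _, hp.2 (by omega)⟩
      apply infinite_of_image hsp.2 m
      · intro n hn
        ext x
        simp only [Set.mem_inter_iff, Set.mem_empty_iff_false, iff_false, Set.mem_setOf_eq]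
        rintro ⟨hx1, hx2⟩
        obtain ⟨n', hn', hx3⟩ := mem_blockUnion.mp hx2
        have hx4 := hm n hn.1 hx1
        have heq := idx_unique (iter_strictMono (hBh2 f hf)) hx4.1 hx4.2 hx3.1 hx3.2
        exact hn.2 (by rwa [heq])
      · intro a ha b hb hab
        have h1 := hm a ha.1 (hmne a)
        have h2 := hm b hb.1 (hmne b)
        rw [hab] at h1
        exact idx_unique (iter_strictMono (hBh2 f hf)) h1.1 h1.2 h2.1 h2.2
  · calc Cardinal.mk ↥(Set.image2 blockUnion Bh S)
        ≤ Cardinal.mk Bh * Cardinal.mk S := Cardinal.mk_image2_le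
      _ ≤ bCard * sCard :=
          mul_le_mul' (le_trans Cardinal.mk_image_le (le_of_eq hBc)) (le_of_eq hSc)
      _ ≤ max (max bCard sCard) Cardinal.aleph0 := Cardinal.mul_le_max _ _
      _ = max bCard sCard := max_eq_left (le_trans aleph0_le_bCard (le_max_left _ _))

end BSAux

/-- The least cardinality of a block-splitting family equals `max {𝔟, 𝔰}`. -/
theorem blockSplitting_number_eq_max_b_s :
    sInf {c : Cardinal | ∃ S : Set (Set ℕ), BlockSplittingFam S ∧ Cardinal.mk S = c} =
      max bCard sCard := by
  apply le_antisymm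
  · obtain ⟨T, hT, hle⟩ := BSAux.upper_bound_exists
    exact le_trans (csInf_le' ⟨T, hT, rfl⟩) hle
  · obtain ⟨T, hT, hTc⟩ := csInf_mem BSAux.blockset_nonempty
    rw [← hTc]
    exact max_le (BSAux.bCard_le_blockFam hT) (BSAux.sCard_le_blockFam hT)
end

section
/- Every splitting family of cardinality less than b is an (ω,ω)-splitting family: for every countable sequence (X_n) of infinite subsets of ω there is a member S of the family such that both {n : |X_n ∩ S| = ω} and {n : |X_n \ S| = ω} are infinite. -/
open Set Filter

/-- Every splitting family of size less than `𝔟` is `(ω,ω)`-splitting: for every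
countable sequence of infinite sets, some member of the family has infinite
intersection with infinitely many of them and its complement also does. -/
theorem small_splitting_family_is_omega_omega_splitting (S : Set (Set ℕ))
    (hS : SplittingFam S) (hsmall : Cardinal.mk S < bCard) :
    ∀ X : ℕ → Set ℕ, (∀ n, (X n).Infinite) →
      ∃ s ∈ S, {n : ℕ | (X n ∩ s).Infinite}.Infinite ∧
        {n : ℕ | (X n \ s).Infinite}.Infinite := by
  classical
  intro X hX
  -- the dominating functions
  set f : Set ℕ → ℕ → ℕ := fun s n =>
    (if h : (X n ∩ s).Finite then h.toFinset.sup id else 0) ⊔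
    (if h : (X n \ s).Finite then h.toFinset.sup id else 0) with hfdef
  have hfle1 : ∀ s n, (X n ∩ s).Finite → ∀ m ∈ X n ∩ s, m ≤ f s n := by
    intro s n h m hm
    have : m ≤ h.toFinset.sup id := Finset.le_sup (f := id) (h.mem_toFinset.mpr hm)
    simp only [hfdef, dif_pos h]
    exact le_trans this le_sup_left
  have hfle2 : ∀ s n, (X n \ s).Finite → ∀ m ∈ X n \ s, m ≤ f s n := by
    intro s n h m hm
    have : m ≤ h.toFinset.sup id := Finset.le_sup (f := id) (h.mem_toFinset.mpr hm)
    simp only [hfdef, dif_pos h]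
    exact le_trans this le_sup_right
  -- the family of functions is small, hence bounded
  have hB : ¬ UnboundedFam (Set.range fun s : S => f s) := by
    intro hunb
    have h1 : bCard ≤ Cardinal.mk (Set.range fun s : S => f s) :=
      csInf_le' ⟨_, hunb, rfl⟩
    exact absurd (h1.trans_lt (Cardinal.mk_range_le.trans_lt hsmall)) (lt_irrefl _)
  obtain ⟨g, hg⟩ := not_not.mp hB
  -- build a diagonal set
  have hex : ∀ n (a : ℕ), ∃ b ∈ X n, a < b := fun n a => (hX n).exists_gt a
  choose pick hpickmem hpickgt using hex
  let y : ℕ → ℕ := fun n =>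
    Nat.rec (pick 0 (g 0)) (fun n ih => pick (n + 1) (max (g (n + 1)) ih)) n
  have hy0 : y 0 = pick 0 (g 0) := rfl
  have hysucc : ∀ n, y (n + 1) = pick (n + 1) (max (g (n + 1)) (y n)) := fun n => rfl
  have hymem : ∀ n, y n ∈ X n := by
    intro n
    cases n with
    | zero => exact hpickmem 0 (g 0)
    | succ n => exact hpickmem (n + 1) _
  have hygt : ∀ n, g n < y n := by
    intro n
    cases n with
    | zero => exact hpickgt 0 (g 0)
    | succ n => exact lt_of_le_of_lt (le_max_left _ _) (hpickgt (n + 1) _)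
  have hmono : StrictMono y := by
    apply strictMono_nat_of_lt_succ
    intro n
    exact lt_of_le_of_lt (le_max_right _ _) (hpickgt (n + 1) _)
  have hYinf : (Set.range y).Infinite := Set.infinite_range_of_injective hmono.injective
  obtain ⟨s, hsS, hsplit⟩ := hS.2 (Set.range y) hYinf
  have hfs : LeStar (f s) g := hg _ ⟨⟨s, hsS⟩, rfl⟩
  obtain ⟨M, hM⟩ := eventually_atTop.mp hfs
  refine ⟨s, hsS, ?_, ?_⟩
  · by_contra hfin
    rw [Set.not_infinite] at hfin
    obtain ⟨N, hN⟩ := hfin.bddAbove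
    have hsub : Set.range y ∩ s ⊆ y '' {n | n ≤ max N M} := by
      rintro m ⟨⟨n, rfl⟩, hms⟩
      refine ⟨n, ?_, rfl⟩
      by_contra hn
      simp only [Set.mem_setOf_eq, not_le] at hn
      have hNn : N < n := lt_of_le_of_lt (le_max_left _ _) hn
      have hMn : M ≤ n := le_of_lt (lt_of_le_of_lt (le_max_right _ _) hn)
      have hfinn : (X n ∩ s).Finite := by
        by_contra hinf
        exact absurd (hN hinf) (not_le.mpr hNn)
      have h1 : y n ≤ f s n := hfle1 s n hfinn (y n) ⟨hymem n, hms⟩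
      have h2 : f s n ≤ g n := hM n hMn
      exact absurd (hygt n) (not_lt.mpr (h1.trans h2))
    exact hsplit.1 (((Set.finite_Iic (max N M)).image y).subset hsub)
  · by_contra hfin
    rw [Set.not_infinite] at hfin
    obtain ⟨N, hN⟩ := hfin.bddAbove
    have hsub : Set.range y \ s ⊆ y '' {n | n ≤ max N M} := by
      rintro m ⟨⟨n, rfl⟩, hms⟩
      refine ⟨n, ?_, rfl⟩
      by_contra hn
      simp only [Set.mem_setOf_eq, not_le] at hn
      have hNn : N < n := lt_of_le_of_lt (le_max_left _ _) hn
      have hMn : M ≤ n := le_of_lt (lt_of_le_of_lt (le_max_right _ _) hn)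
      have hfinn : (X n \ s).Finite := by
        by_contra hinf
        exact absurd (hN hinf) (not_le.mpr hNn)
      have h1 : y n ≤ f s n := hfle2 s n hfinn (y n) ⟨hymem n, hms⟩
      have h2 : f s n ≤ g n := hM n hMn
      exact absurd (hygt n) (not_lt.mpr (h1.trans h2))
    exact hsplit.2 (((Set.finite_Iic (max N M)).image y).subset hsub)
end

section
/- The splitting number s has uncountable cofinality. -/
open Set Filter

/-- Every infinite set of naturals can be split. -/
lemma exists_split {X : Set ℕ} (hX : X.Infinite) :
    ∃ A : Set ℕ, A.Infinite ∧ Splits A X := by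
  let f : ℕ ↪ X := hX.natEmbedding
  refine ⟨range (fun n => (f (2 * n) : ℕ)), ?_, ?_, ?_⟩
  · apply Set.infinite_range_of_injective
    intro a b hab
    have := f.injective (Subtype.ext hab)
    omega
  · have hsub : range (fun n => (f (2 * n) : ℕ)) ⊆ X := by
      rintro _ ⟨n, rfl⟩; exact (f (2 * n)).2
    rw [Set.inter_eq_self_of_subset_right hsub]
    apply Set.infinite_range_of_injective
    intro a b hab
    have := f.injective (Subtype.ext hab)
    omega
  · have hsub : range (fun n => (f (2 * n + 1) : ℕ)) ⊆
        X \ range (fun n => (f (2 * n) : ℕ)) := by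
      rintro _ ⟨n, rfl⟩
      refine ⟨(f (2 * n + 1)).2, ?_⟩
      rintro ⟨m, hm⟩
      have := f.injective (Subtype.ext hm)
      omega
    refine Set.Infinite.mono hsub ?_
    apply Set.infinite_range_of_injective
    intro a b hab
    have := f.injective (Subtype.ext hab)
    omega

lemma splittingFam_univ : SplittingFam {A : Set ℕ | A.Infinite} := by
  refine ⟨fun s hs => hs, fun X hX => ?_⟩
  obtain ⟨A, hA, hsp⟩ := exists_split hX
  exact ⟨A, hA, hsp⟩

lemma sSet_nonempty :
    {c : Cardinal | ∃ S : Set (Set ℕ), SplittingFam S ∧ Cardinal.mk S = c}.Nonempty :=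
  ⟨_, {A : Set ℕ | A.Infinite}, splittingFam_univ, rfl⟩

/-- Finite families split nothing relative to any infinite set. -/
lemma finite_unsplit {S : Set (Set ℕ)} (hS : S.Finite) :
    ∀ Y : Set ℕ, Y.Infinite → ∃ X, X ⊆ Y ∧ X.Infinite ∧ ∀ A ∈ S, ¬ Splits A X := by
  refine Set.Finite.induction_on
    (motive := fun S _ => ∀ Y : Set ℕ, Y.Infinite →
      ∃ X, X ⊆ Y ∧ X.Infinite ∧ ∀ A ∈ S, ¬ Splits A X) S hS
    (fun Y hY => ⟨Y, subset_rfl, hY, by simp⟩) ?_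
  intro B S hB hSfin IH Y hY
  by_cases hc : (Y ∩ B).Infinite
  · obtain ⟨X, hXs, hXinf, hXun⟩ := IH (Y ∩ B) hc
    refine ⟨X, hXs.trans inter_subset_left, hXinf, ?_⟩
    intro A hA
    rcases Set.mem_insert_iff.1 hA with rfl | hA
    · rintro ⟨-, h2⟩
      have : X \ A = ∅ := by
        apply Set.eq_empty_of_subset_empty
        intro x hx
        exact hx.2 (hXs hx.1).2
      rw [this] at h2
      exact h2 finite_empty
    · exact hXun A hA
  · have hd : (Y \ B).Infinite := by
      rw [Set.not_infinite] at hc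
      have : Y ⊆ (Y ∩ B) ∪ (Y \ B) := by
        intro x hx
        by_cases hxB : x ∈ B
        · exact Or.inl ⟨hx, hxB⟩
        · exact Or.inr ⟨hx, hxB⟩
      intro hfin
      exact hY (Set.Finite.subset (hc.union hfin) this)
    obtain ⟨X, hXs, hXinf, hXun⟩ := IH (Y \ B) hd
    refine ⟨X, hXs.trans diff_subset, hXinf, ?_⟩
    intro A hA
    rcases Set.mem_insert_iff.1 hA with rfl | hA
    · rintro ⟨h1, -⟩
      have : X ∩ A = ∅ := by
        apply Set.eq_empty_of_subset_empty
        intro x hx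
        exact (hXs hx.1).2 hx.2
      rw [this] at h1
      exact h1 finite_empty
    · exact hXun A hA

lemma aleph0_le_sCard : Cardinal.aleph0 ≤ sCard := by
  apply le_csInf sSet_nonempty
  rintro c ⟨S, hS, rfl⟩
  by_contra h
  rw [not_le, Cardinal.lt_aleph0_iff_set_finite] at h
  obtain ⟨X, -, hXinf, hXun⟩ := finite_unsplit h univ infinite_univ
  obtain ⟨A, hA, hsp⟩ := hS.2 X hXinf
  exact hXun A hA hsp

/-- Key lemma: a family of size `< 𝔰` fails to split some infinite subset
of any infinite set. -/
lemma small_unsplit {F : Set (Set ℕ)} (hF : Cardinal.mk F < sCard)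
    {Y : Set ℕ} (hY : Y.Infinite) :
    ∃ X, X ⊆ Y ∧ X.Infinite ∧ ∀ A ∈ F, ¬ Splits A X := by
  let f0 : ℕ ↪ Y := hY.natEmbedding
  let f : ℕ → ℕ := fun n => (f0 n : ℕ)
  have hf : Function.Injective f := fun a b hab => f0.injective (Subtype.ext hab)
  set G : Set (Set ℕ) := {B | B.Infinite ∧ ∃ A ∈ F, B = f ⁻¹' A} with hGdef
  have hGcard : Cardinal.mk G < sCard := by
    refine lt_of_le_of_lt (le_trans ?_ (Cardinal.mk_image_le (f := fun A => f ⁻¹' A) (s := F))) hF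
    apply Cardinal.mk_le_mk_of_subset
    rintro B ⟨-, A, hA, rfl⟩
    exact ⟨A, hA, rfl⟩
  have hGnot : ¬ SplittingFam G := by
    intro h
    have hmem : Cardinal.mk G ∈
        {c : Cardinal | ∃ S : Set (Set ℕ), SplittingFam S ∧ Cardinal.mk S = c} :=
      ⟨G, h, rfl⟩
    exact absurd (csInf_le' hmem) (not_le.2 hGcard)
  have hGinf : ∀ B ∈ G, B.Infinite := fun B hB => hB.1
  have : ∃ W : Set ℕ, W.Infinite ∧ ∀ B ∈ G, ¬ Splits B W := by
    by_contra hcon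
    push_neg at hcon
    apply hGnot
    refine ⟨hGinf, fun X hX => ?_⟩
    obtain ⟨B, hB, hsp⟩ := hcon X hX
    exact ⟨B, hB, hsp⟩
  obtain ⟨W, hWinf, hWun⟩ := this
  refine ⟨f '' W, ?_, Set.Infinite.image (hf.injOn) hWinf, ?_⟩
  · rintro _ ⟨n, -, rfl⟩; exact (f0 n).2
  · intro A hA hsp
    obtain ⟨h1, h2⟩ := hsp
    have hr : f '' W ⊆ range f := image_subset_range f W
    have hp1 : (f ⁻¹' (f '' W ∩ A)).Infinite :=
      h1.preimage ((inter_subset_left).trans hr)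
    have hp2 : (f ⁻¹' (f '' W \ A)).Infinite :=
      h2.preimage ((diff_subset).trans hr)
    rw [Set.preimage_inter, Set.preimage_image_eq W hf] at hp1
    rw [Set.preimage_diff, Set.preimage_image_eq W hf] at hp2
    have hBG : (f ⁻¹' A) ∈ G := by
      refine ⟨Set.Infinite.mono inter_subset_right hp1, A, hA, rfl⟩
    exact hWun _ hBG ⟨hp1, hp2⟩


/-- The splitting number `𝔰` has uncountable cofinality. -/
theorem s_has_uncountable_cofinality : Cardinal.aleph0 < (sCard.ord).cof := by
  by_contra hcon
  rw [not_lt] at hcon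
  have hs0 : Cardinal.aleph0 ≤ sCard := aleph0_le_sCard
  -- a minimal splitting family
  obtain ⟨S₀, hS₀, hS₀card⟩ := csInf_mem sSet_nonempty
  -- the canonical well-ordered type of size sCard
  have hne : Nonempty (sCard.ord).ToType := by
    rw [Ordinal.toType_nonempty_iff_ne_zero, ne_eq, Cardinal.ord_eq_zero]
    intro h
    rw [h] at hs0
    exact absurd (le_antisymm hs0 (zero_le (a := Cardinal.aleph0))) Cardinal.aleph0_ne_zero
  have hmk : Cardinal.mk S₀ = Cardinal.mk (sCard.ord).ToType := by
    rw [hS₀card, Cardinal.mk_ord_toType]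
    rfl
  obtain ⟨e⟩ := Cardinal.eq.1 hmk
  -- a countable cofinal subset
  obtain ⟨T, hTub, hTcard⟩ := Order.exists_cof_eq (sCard.ord).ToType
  rw [Ordinal.cof_toType] at hTcard
  have hTcount : Countable T := by
    rw [← Cardinal.mk_le_aleph0_iff, hTcard]
    exact hcon
  have hTne : T.Nonempty := by
    obtain ⟨b, hb, -⟩ := hTub hne.some
    exact ⟨b, hb⟩
  obtain ⟨g, hg⟩ := Countable.exists_surjective hTne (Set.countable_coe_iff.1 hTcount)
  -- decompose S₀ into countably many small pieces
  set F : ℕ → Set (Set ℕ) :=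
    fun n => {A : Set ℕ | ∃ hA : A ∈ S₀, e ⟨A, hA⟩ ≤ (g n : (sCard.ord).ToType)} with hFdef
  have hFsmall : ∀ n, Cardinal.mk (F n) < sCard := by
    intro n
    have hle : Cardinal.mk (F n) ≤
        Cardinal.mk (Set.Iic (g n : (sCard.ord).ToType)) := by
      apply Cardinal.mk_le_of_injective
        (f := fun x : F n => (⟨e ⟨x.1, x.2.choose⟩, x.2.choose_spec⟩ :
          Set.Iic (g n : (sCard.ord).ToType)))
      intro x y hxy
      have h1 : e ⟨x.1, x.2.choose⟩ = e ⟨y.1, y.2.choose⟩ := Subtype.ext_iff.mp hxy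
      have h2 : (⟨x.1, x.2.choose⟩ : S₀) = ⟨y.1, y.2.choose⟩ := e.injective h1
      have h3 : x.1 = y.1 := congrArg (fun z : S₀ => (z : Set ℕ)) h2
      exact Subtype.ext h3
    refine lt_of_le_of_lt hle ?_
    rw [← Set.Iio_insert, Cardinal.mk_insert (by simp)]
    exact Cardinal.add_lt_of_lt hs0 (Cardinal.mk_Iio_ord_toType _)
      (lt_of_lt_of_le Cardinal.one_lt_aleph0 hs0)
  have hcover : ∀ A, A ∈ S₀ → ∃ n, A ∈ F n := by
    intro A hA
    obtain ⟨b, hb, hblt⟩ := hTub (e ⟨A, hA⟩)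
    obtain ⟨m, hm⟩ := hg ⟨b, hb⟩
    refine ⟨m, hA, ?_⟩
    rw [hm]
    exact hblt
  -- build a decreasing chain of infinite sets avoiding splitting
  have hstep : ∀ n (Y : Set ℕ), Y.Infinite →
      ∃ X, X ⊆ Y ∧ X.Infinite ∧ ∀ A ∈ F n, ¬ Splits A X :=
    fun n Y hY => small_unsplit (hFsmall n) hY
  choose ch chsub chinf chun using hstep
  let gch : ℕ → {Y : Set ℕ // Y.Infinite} := fun n =>
    Nat.rec ⟨ch 0 univ infinite_univ, chinf 0 univ infinite_univ⟩
      (fun n p => ⟨ch (n + 1) p.1 p.2, chinf (n + 1) p.1 p.2⟩) n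
  have hgsucc : ∀ n, (gch (n + 1)).1 = ch (n + 1) (gch n).1 (gch n).2 := fun n => rfl
  have hgsub : ∀ n, (gch (n + 1)).1 ⊆ (gch n).1 := by
    intro n
    rw [hgsucc]
    exact chsub (n + 1) _ _
  have hgun : ∀ n, ∀ A ∈ F n, ¬ Splits A (gch n).1 := by
    intro n
    cases n with
    | zero => exact chun 0 univ infinite_univ
    | succ n =>
      rw [show (gch (n + 1)).1 = ch (n + 1) (gch n).1 (gch n).2 from rfl] at *
      exact chun (n + 1) (gch n).1 (gch n).2
  have hchain : ∀ m n, m ≤ n → (gch n).1 ⊆ (gch m).1 := by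
    intro m n h
    induction h with
    | refl => exact subset_rfl
    | @step k h ih => exact (hgsub k).trans ih
  -- diagonalize
  have hpick : ∀ n (k : ℕ), ∃ b ∈ (gch n).1, k < b := fun n k => (gch n).2.exists_gt k
  choose pick pmem pgt using hpick
  let aa : ∀ n : ℕ, {b : ℕ // b ∈ (gch n).1} := fun n =>
    Nat.rec ⟨pick 0 0, pmem 0 0⟩ (fun n p => ⟨pick (n + 1) p.1, pmem (n + 1) p.1⟩) n
  have haalt : ∀ n, (aa n).1 < (aa (n + 1)).1 := fun n => pgt (n + 1) (aa n).1
  set a : ℕ → ℕ := fun n => (aa n).1 with hadef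
  have hamono : StrictMono a := strictMono_nat_of_lt_succ haalt
  have hXinf : (range a).Infinite := Set.infinite_range_of_injective hamono.injective
  have hmemtail : ∀ n k, n ≤ k → a k ∈ (gch n).1 := fun n k h => hchain n k h (aa k).2
  -- the diagonal set is split by some member of S₀, contradiction
  obtain ⟨A, hAS, hsp⟩ := hS₀.2 (range a) hXinf
  obtain ⟨n, hAF⟩ := hcover A hAS
  apply hgun n A hAF
  constructor
  · by_contra hfin
    rw [Set.not_infinite] at hfin
    have hsub2 : range a ∩ A ⊆ (a '' (Set.Iio n)) ∪ ((gch n).1 ∩ A) := by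
      rintro x ⟨⟨k, rfl⟩, hxA⟩
      by_cases hk : n ≤ k
      · exact Or.inr ⟨hmemtail n k hk, hxA⟩
      · exact Or.inl ⟨k, Set.mem_Iio.mpr (by omega), rfl⟩
    exact hsp.1 ((((Set.finite_Iio n).image a).union hfin).subset hsub2)
  · by_contra hfin
    rw [Set.not_infinite] at hfin
    have hsub2 : range a \ A ⊆ (a '' (Set.Iio n)) ∪ ((gch n).1 \ A) := by
      rintro x ⟨⟨k, rfl⟩, hxA⟩
      by_cases hk : n ≤ k
      · exact Or.inr ⟨hmemtail n k hk, hxA⟩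
      · exact Or.inl ⟨k, Set.mem_Iio.mpr (by omega), rfl⟩
    exact hsp.2 ((((Set.finite_Iio n).image a).union hfin).subset hsub2)
end

section
/- If non(M) = ω₁, then there exists a family X = {f_α : α < ω₁} ⊆ ω^ω such that for every g : ω → ω there is α < ω₁ such that for all β > α the set {n : f_β(n) = g(n)} is infinite (an IE-Luzin set). -/
open Set Filter

/-- For infinite `A ⊆ ℕ` and `g : ℕ → ℕ`, the set of functions agreeing with `g`
only finitely often on `A` is meagre. -/
lemma aux_isMeagre_finAgree (g : ℕ → ℕ) (A : Set ℕ) (hA : A.Infinite) :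
    IsMeagre {f : ℕ → ℕ | {n | n ∈ A ∧ f n = g n}.Finite} := by
  set U : ℕ → Set (ℕ → ℕ) := fun m => {f | ∃ n, n ∈ A ∧ m ≤ n ∧ f n = g n} with hU
  have hopen : ∀ m, IsOpen (U m) := by
    intro m
    have : U m = ⋃ n ∈ {n | n ∈ A ∧ m ≤ n}, (fun f : ℕ → ℕ => f n) ⁻¹' {g n} := by
      ext f; simp [hU, and_assoc]
    rw [this]
    exact isOpen_biUnion fun n _ => (continuous_apply n).isOpen_preimage _ (isOpen_discrete _)
  have hdense : ∀ m, Dense (U m) := by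
    intro m
    rw [dense_iff_inter_open]
    intro V hV ⟨f, hf⟩
    obtain ⟨I, u, hIu, hsub⟩ := isOpen_pi_iff.1 hV f hf
    obtain ⟨n, hnA, hn⟩ : ∃ n ∈ A, n ∉ (↑I : Set ℕ) ∪ Iio m := by
      have : (A \ ((↑I : Set ℕ) ∪ Iio m)).Infinite :=
        hA.diff ((I.finite_toSet).union (finite_Iio m))
      obtain ⟨n, hn⟩ := this.nonempty
      exact ⟨n, hn.1, hn.2⟩
    refine ⟨Function.update f n (g n), hsub fun i hi => ?_, n, hnA, ?_, ?_⟩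
    · have : i ≠ n := fun h => hn (Or.inl (h ▸ hi))
      rw [Function.update_of_ne this]
      exact (hIu i hi).2
    · simpa using fun h => hn (Or.inr h)
    · simp
  have hres : (⋂ m, U m) ∈ residual (ℕ → ℕ) :=
    countable_iInter_mem.mpr fun m => residual_of_dense_open (hopen m) (hdense m)
  refine IsMeagre.mono (s := (⋂ m, U m)ᶜ) ?_ ?_
  swap
  · rw [IsMeagre, compl_compl]; exact hres
  · intro f hf
    simp only [mem_compl_iff, mem_iInter, not_forall]
    obtain ⟨m, hm⟩ := (hf : Set.Finite _).bddAbove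
    refine ⟨m + 1, ?_⟩
    rintro ⟨n, hnA, hmn, hfg⟩
    exact absurd (hm ⟨hnA, hfg⟩) (by omega)

/-- The Baire space itself is not meagre. -/
lemma aux_not_meagre_univ : ¬ IsMeagre (Set.univ : Set (ℕ → ℕ)) := by
  intro h
  rw [IsMeagre, compl_univ] at h
  exact (dense_of_mem_residual h).nonempty.ne_empty rfl

/-- `non(M)`: the least cardinality of a non-meager subset of the Baire space. -/
noncomputable def nonMeagerCard : Cardinal :=
  sInf {c : Cardinal | ∃ S : Set (ℕ → ℕ), ¬ IsMeagre S ∧ Cardinal.mk S = c}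

/-- Universe-polymorphic version of the main theorem. -/
theorem aux_IELuzin.{u} (h : nonMeagerCard = Cardinal.aleph 1) :
    ∃ F : (Cardinal.aleph 1 : Cardinal.{u}).ord.ToType → ℕ → ℕ,
      ∀ g : ℕ → ℕ, ∃ α : (Cardinal.aleph 1 : Cardinal.{u}).ord.ToType,
        ∀ β : (Cardinal.aleph 1 : Cardinal.{u}).ord.ToType, α < β →
          {n : ℕ | F β n = g n}.Infinite := by
  classical
  set T := (Cardinal.aleph 1 : Cardinal.{u}).ord.ToType with hT
  -- get a non-meagre set of size ℵ₁
  have hmem : Cardinal.aleph 1 ∈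
      {c : Cardinal | ∃ S : Set (ℕ → ℕ), ¬ IsMeagre S ∧ Cardinal.mk S = c} := by
    rw [← h]
    exact csInf_mem ⟨Cardinal.mk (Set.univ : Set (ℕ → ℕ)), Set.univ, aux_not_meagre_univ, rfl⟩
  obtain ⟨S, hSnm, hScard⟩ := hmem
  -- enumeration of S by T
  have hTcard : Cardinal.lift.{0} (Cardinal.mk T) = Cardinal.lift (Cardinal.mk ↥S) := by
    rw [hScard, hT, Cardinal.mk_toType, Cardinal.card_ord, Cardinal.lift_aleph,
      Cardinal.lift_aleph]
    norm_num
  obtain ⟨e⟩ := Cardinal.lift_mk_eq'.mp hTcard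
  set x : T → (ℕ → ℕ) := fun α => (e α : ℕ → ℕ) with hx
  -- surjections onto initial segments
  have hIic : ∀ β : T, ∃ eb : ℕ → ↥(Set.Iic β), Function.Surjective eb := by
    intro β
    have h1 : (Set.Iio β).Countable :=
      (Cardinal.countable_iff_lt_aleph_one _).mpr (Cardinal.mk_Iio_ord_toType β)
    have h2 : (Set.Iic β).Countable := by
      have : Set.Iic β = insert β (Set.Iio β) := by
        ext y; simp [le_iff_lt_or_eq, or_comm]
      rw [this]; exact h1.insert β
    exact h2.exists_surjective ⟨β, le_refl β⟩
  choose eb hfeb using hIic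
  set F : T → ℕ → ℕ := fun β n => x ((eb β (Nat.unpair n).1 : ↥(Set.Iic β)) : T) n with hF
  refine ⟨F, fun g => ?_⟩
  -- the meagre set of functions agreeing finitely with g on some column
  set M : Set (ℕ → ℕ) :=
    ⋃ k, {f : ℕ → ℕ | {n | n ∈ Set.range (Nat.pair k) ∧ f n = g n}.Finite} with hM
  have hMm : IsMeagre M := by
    refine isMeagre_iUnion fun k => aux_isMeagre_finAgree g _ ?_
    exact Set.infinite_range_of_injective fun a b hab => by
      have := congrArg Nat.unpair hab; simpa using this
  have hnotsub : ¬ S ⊆ M := fun hsub => hSnm (hMm.mono hsub)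
  obtain ⟨s, hsS, hsM⟩ := not_subset.mp hnotsub
  set α : T := e.symm ⟨s, hsS⟩ with hα
  have hxα : x α = s := by rw [hx, hα]; simp
  refine ⟨α, fun β hβ => ?_⟩
  -- find the column of α
  obtain ⟨k, hk⟩ := hfeb β ⟨α, le_of_lt hβ⟩
  have hkey : {n | n ∈ Set.range (Nat.pair k) ∧ s n = g n}.Infinite := by
    intro hfin
    exact hsM (Set.mem_iUnion.mpr ⟨k, hfin⟩)
  refine hkey.mono ?_
  rintro n ⟨⟨m, rfl⟩, hsg⟩
  have h1 : (Nat.unpair (Nat.pair k m)).1 = k := by simp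
  show F β (Nat.pair k m) = g (Nat.pair k m)
  rw [hF]
  simp only [h1, hk]
  rw [hxα]; exact hsg

/-- If `non(M) = ω₁` then there is an `IE`-Luzin set: a family
`{f_α : α < ω₁} ⊆ ω^ω` such that every `g : ω → ω` agrees infinitely often with
all but boundedly many members of the family. -/
theorem nonM_omega1_implies_IELuzin (h : nonMeagerCard = Cardinal.aleph 1) :
    ∃ F : (Cardinal.aleph 1).ord.ToType → ℕ → ℕ,
      ∀ g : ℕ → ℕ, ∃ α : (Cardinal.aleph 1).ord.ToType,
        ∀ β : (Cardinal.aleph 1).ord.ToType, α < β →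
          {n : ℕ | F β n = g n}.Infinite :=
  aux_IELuzin h
end

section
/- If an ideal I on ω is Katětov below an ideal J (I ≤_K J) and I is Shelah-Steprāns, then J is Shelah-Steprāns. -/
open Set Filter

/-- `I` is Shelah-Steprāns: for every set `X` of nonempty finite subsets of ω such
that every `A ∈ I` is avoided by some `s ∈ X`, there is an infinite `Y ⊆ X` with
`⋃ Y ∈ I`. -/
def ShelahSteprans (I : Set (Set ℕ)) : Prop :=
  ∀ X : Set (Set ℕ), (∀ s ∈ X, s.Finite ∧ s.Nonempty) →
    (∀ A ∈ I, ∃ s ∈ X, s ∩ A = ∅) →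
    ∃ Y ⊆ X, Y.Infinite ∧ ⋃₀ Y ∈ I

/-- Being Shelah-Steprāns is upward closed in the Katětov order. -/
theorem shelahSteprans_katetov_upward (I J : Set (Set ℕ))
    (hI : IsIdealOnNat I) (hJ : IsIdealOnNat J)
    (f : ℕ → ℕ) (hf : ∀ A ∈ I, f ⁻¹' A ∈ J)
    (hSS : ShelahSteprans I) : ShelahSteprans J := by
  intro X hX hpos
  set X' : Set (Set ℕ) := (fun s => f '' s) '' X with hX'def
  have h1 : ∀ t ∈ X', t.Finite ∧ t.Nonempty := by
    rintro t ⟨s, hs, rfl⟩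
    exact ⟨(hX s hs).1.image f, (hX s hs).2.image f⟩
  have h2 : ∀ A ∈ I, ∃ t ∈ X', t ∩ A = ∅ := by
    intro A hA
    obtain ⟨s, hs, hdisj⟩ := hpos (f ⁻¹' A) (hf A hA)
    refine ⟨f '' s, ⟨s, hs, rfl⟩, ?_⟩
    ext x
    simp only [mem_inter_iff, mem_image, mem_empty_iff_false, iff_false, not_and]
    rintro ⟨y, hy, rfl⟩ hxA
    have : y ∈ s ∩ f ⁻¹' A := ⟨hy, hxA⟩
    rw [hdisj] at this
    exact this
  obtain ⟨Y', hY'X', hY'inf, hY'I⟩ := hSS X' h1 h2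
  have hchoice : ∀ t : Y', ∃ s ∈ X, f '' s = (t : Set ℕ) := fun t => hY'X' t.2
  choose g hgX hgf using hchoice
  have hginj : Function.Injective g := by
    intro a b hab
    apply Subtype.ext
    rw [← hgf a, ← hgf b, hab]
  haveI : Infinite Y' := Set.infinite_coe_iff.mpr hY'inf
  refine ⟨Set.range g, ?_, ?_, ?_⟩
  · rintro s ⟨t, rfl⟩; exact hgX t
  · exact Set.infinite_range_of_injective hginj
  · apply hJ.2.1 (f ⁻¹' (⋃₀ Y')) _ (hf _ hY'I)
    rintro x ⟨s, ⟨t, rfl⟩, hx⟩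
    exact ⟨(t : Set ℕ), t.2, by rw [← hgf t]; exact ⟨x, hx, rfl⟩⟩
end

section
/- Every non-meager ideal on ω is Shelah-Steprāns. -/
open Set Filter
open scoped Classical

/-- Key auxiliary lemma: a set of functions which, beyond every index `m`, is forced to
take the value `false` somewhere on a finite nonempty set `s k` with `min (s k) ≥ k`,
is nowhere dense. -/
lemma aux_nowhereDense (s : ℕ → Set ℕ) (hfin : ∀ k, (s k).Finite)
    (hlb : ∀ k, ∀ j ∈ s k, k ≤ j) (m : ℕ) :
    IsNowhereDense {f : ℕ → Bool | ∀ k, m ≤ k → ∃ j ∈ s k, f j = false} := by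
  set M : Set (ℕ → Bool) := {f : ℕ → Bool | ∀ k, m ≤ k → ∃ j ∈ s k, f j = false} with hM
  have hclosed : IsClosed M := by
    have : M = ⋂ k, ⋂ (_ : m ≤ k), ⋃ j ∈ s k, {f : ℕ → Bool | f j = false} := by
      ext f; simp [hM]
    rw [this]
    refine isClosed_iInter fun k => isClosed_iInter fun _ => ?_
    refine (hfin k).isClosed_biUnion fun j _ => ?_
    have : IsClosed ((fun f : ℕ → Bool => f j) ⁻¹' {false}) :=
      (isClosed_discrete _).preimage (continuous_apply j)
    simpa [Set.preimage] using this
  rw [hclosed.isNowhereDense_iff]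
  by_contra h
  obtain ⟨f, hf⟩ := Set.nonempty_iff_ne_empty.2 h
  obtain ⟨F, u, hu, hsub⟩ := isOpen_pi_iff.1 isOpen_interior f hf
  -- pick k large
  set k := max m (F.sup id + 1) with hk
  have hkm : m ≤ k := le_max_left _ _
  set g : ℕ → Bool := fun n => if n ∈ F then f n else true with hg
  have hgmem : g ∈ (F : Set ℕ).pi u := by
    intro i hi
    simp only [hg]
    rw [if_pos (by exact_mod_cast hi)]
    exact (hu i (by exact_mod_cast hi)).2
  have hgM : g ∈ M := interior_subset (hsub hgmem)
  obtain ⟨j, hj, hjf⟩ := hgM k hkm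
  have hjk : k ≤ j := hlb k j hj
  have hjF : j ∉ F := by
    intro hjF
    have : j ≤ F.sup id := Finset.le_sup (f := id) hjF
    omega
  simp [hg, hjF] at hjf

/-- Every non-meager ideal on ω is Shelah-Steprāns. -/
theorem nonmeager_ideal_is_shelahSteprans (I : Set (Set ℕ)) (hI : IsIdealOnNat I)
    (hnm : ¬ IsMeagre (chi '' I)) : ShelahSteprans I := by
  obtain ⟨hfin, hdown, hunion, -⟩ := hI
  intro X hX h2
  -- for each n, choose t n ∈ X avoiding [0, n)
  have hch : ∀ n : ℕ, ∃ s ∈ X, s ∩ {m | m < n} = ∅ := fun n =>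
    h2 _ (hfin _ (Set.finite_Iio n))
  choose t htX htdisj using hch
  have htlb : ∀ n, ∀ j ∈ t n, n ≤ j := by
    intro n j hj
    by_contra hlt
    push_neg at hlt
    have : j ∈ t n ∩ {m | m < n} := ⟨hj, hlt⟩
    rw [htdisj n] at this
    exact this
  have htfin : ∀ n, (t n).Finite := fun n => (hX _ (htX n)).1
  have htne : ∀ n, (t n).Nonempty := fun n => (hX _ (htX n)).2
  -- recursive sequence of starting points
  let g : ℕ → ℕ := fun k => Nat.rec 0 (fun _ gk => sSup (t gk) + 1) k
  have hg0 : g 0 = 0 := rfl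
  have hgs : ∀ k, g (k + 1) = sSup (t (g k)) + 1 := fun k => rfl
  set s : ℕ → Set ℕ := fun k => t (g k) with hs
  have hsSup_mem : ∀ n, sSup (t n) ∈ t n := fun n =>
    Nat.sSup_mem (htne n) ((htfin n).bddAbove)
  have hle_sSup : ∀ n, ∀ j ∈ t n, j ≤ sSup (t n) := fun n j hj =>
    le_csSup ((htfin n).bddAbove) hj
  have hgmono : ∀ k, g k < g (k + 1) := by
    intro k
    rw [hgs]
    have := htlb (g k) _ (hsSup_mem (g k))
    omega
  have hgk : ∀ k, k ≤ g k := by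
    intro k
    induction k with
    | zero => simp [hg0]
    | succ n ih => have := hgmono n; omega
  have hslb : ∀ k, ∀ j ∈ s k, k ≤ j := fun k j hj =>
    le_trans (hgk k) (htlb (g k) j hj)
  have hsub_bound : ∀ k, ∀ j ∈ s k, j < g (k + 1) := by
    intro k j hj
    have := hle_sSup (g k) j hj
    rw [hgs]; omega
  have hgmono' : StrictMono g := strictMono_nat_of_lt_succ hgmono
  -- injectivity of s
  have hkey : ∀ k l, k < l → s k ≠ s l := by
    intro k l hlt hkl
    obtain ⟨x, hx⟩ := htne (g k)
    have hx1 : x < g (k + 1) := hsub_bound k x hx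
    have hx2 : x ∈ s l := hkl ▸ hx
    have hx3 : g l ≤ x := htlb (g l) x hx2
    have hgl : g (k + 1) ≤ g l := hgmono'.monotone (show k + 1 ≤ l by omega)
    omega
  have hsinj : Function.Injective s := by
    intro k l hkl
    by_contra hne
    rcases Nat.lt_or_ge k l with h | h
    · exact hkey k l h hkl
    · exact hkey l k (by omega) hkl.symm
  -- key claim: some A ∈ I contains infinitely many s k
  by_cases hKey : ∃ A ∈ I, {k | s k ⊆ A}.Infinite
  · obtain ⟨A, hA, hAinf⟩ := hKey
    refine ⟨s '' {k | s k ⊆ A}, ?_, ?_, ?_⟩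
    · rintro _ ⟨k, -, rfl⟩; exact htX (g k)
    · exact hAinf.image (hsinj.injOn)
    · refine hdown A _ hA ?_
      apply Set.sUnion_subset
      rintro T ⟨k, hk, rfl⟩ x hx
      exact hk hx
  -- otherwise chi '' I is meager: contradiction
  · exfalso
    push_neg at hKey
    apply hnm
    set M : ℕ → Set (ℕ → Bool) :=
      fun m => {f : ℕ → Bool | ∀ k, m ≤ k → ∃ j ∈ s k, f j = false} with hMdef
    have hMnd : ∀ m, IsNowhereDense (M m) :=
      aux_nowhereDense s (fun k => htfin (g k)) hslb
    have hcover : chi '' I ⊆ ⋃ m, M m := by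
      rintro _ ⟨A, hA, rfl⟩
      have hfinK : {k | s k ⊆ A}.Finite := hKey A hA
      obtain ⟨m, hm⟩ := hfinK.bddAbove
      refine Set.mem_iUnion.2 ⟨m + 1, ?_⟩
      intro k hk
      have hns : ¬ s k ⊆ A := by
        intro hsub
        have := hm hsub
        omega
      obtain ⟨j, hj, hjA⟩ := Set.not_subset.1 hns
      exact ⟨j, hj, by simp [chi, hjA]⟩
    refine IsMeagre.mono hcover ?_
    exact isMeagre_iUnion fun m => by
      rw [isMeagre_iff_countable_union_isNowhereDense]
      exact ⟨{M m}, by simpa using hMnd m, Set.countable_singleton _, by simp⟩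
end
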